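/- arXiv:2605.10205 — 5 statements merged into one kernel-verified Lean document; each statement's English description precedes it below -/
import Mathlib

section
/- Assume f is convex, L-Lipschitz and β-smooth, P is a gossip matrix with spectral bound λ ∈ [0, 1), and η_t = η for all t with 0 < η ≤ 2/β. Let w̄_avg = (1/(T+1)) ∑_{t=1}^{T+1} w̄^t and v̄_avg = (1/(T+1)) ∑_{t=1}^{T+1} v̄^t be the averaged-iterate outputs. Then for every z ∈ 𝒵, |f(w̄_avg; z) − f(v̄_avg; z)| ≤ 2η²βL²T/(1−λ) + (2ηL²/((T+1)m)) ∑_{t=1}^T (T+1−t) 𝟙[j_t(r)=k]. -/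
open scoped RealInnerProductSpace

open Finset

open Finset

section aux
variable {H : Type*} [NormedAddCommGroup H] [InnerProductSpace ℝ H]

lemma grad_line {φ : H → ℝ} {g : H → H} (hd : ∀ x, HasFDerivAt φ ((innerSL ℝ) (g x)) x)
    (x y : H) (t : ℝ) :
    HasDerivAt (fun s : ℝ => φ (x + s • (y - x))) ⟪g (x + t • (y - x)), y - x⟫ t := by
  have hc : HasDerivAt (fun s : ℝ => x + s • (y - x)) (y - x) t := by
    simpa using ((hasDerivAt_id t).smul_const (y - x)).const_add x
  exact (hd (x + t • (y - x))).comp_hasDerivAt t hc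

lemma grad_ineq {φ : H → ℝ} {g : H → H} (hd : ∀ x, HasFDerivAt φ ((innerSL ℝ) (g x)) x)
    (hc : ConvexOn ℝ Set.univ φ) (x y : H) :
    φ x + ⟪g x, y - x⟫ ≤ φ y := by
  set ψ : ℝ → ℝ := fun s => φ (x + s • (y - x)) with hψ
  have hψc : ConvexOn ℝ Set.univ ψ := by
    have := hc.comp_affineMap (AffineMap.lineMap x y : ℝ →ᵃ[ℝ] H)
    simp only [Set.preimage_univ] at this
    suffices hψe : ψ = φ ∘ AffineMap.lineMap x y by rw [hψe]; exact this
    funext s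
    simp [ψ, AffineMap.lineMap_apply_module]
    congr 1
    module
  have hslope := hψc.le_slope_of_hasDerivWithinAt_Ioi (Set.mem_univ 0) (Set.mem_univ 1)
    zero_lt_one (grad_line hd x y 0).hasDerivWithinAt
  rw [slope_def_field] at hslope
  simp only [zero_smul, add_zero, one_smul, add_sub_cancel, sub_zero, div_one, ψ] at hslope
  linarith [hslope]

end aux
section aux2
variable {H : Type*} [NormedAddCommGroup H] [InnerProductSpace ℝ H]

lemma descent {φ : H → ℝ} {g : H → H} {β : ℝ} (hβ : 0 < β)
    (hd : ∀ x, HasFDerivAt φ ((innerSL ℝ) (g x)) x)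
    (hs : ∀ x y, ‖g x - g y‖ ≤ β * ‖x - y‖) (x y : H) :
    φ y ≤ φ x + ⟪g x, y - x⟫ + β / 2 * ‖y - x‖ ^ 2 := by
  set ψ : ℝ → ℝ := fun s => φ (x + s • (y - x)) - s * ⟪g x, y - x⟫ - β / 2 * s ^ 2 * ‖y - x‖ ^ 2
    with hψ
  have hder : ∀ t : ℝ, HasDerivAt ψ
      (⟪g (x + t • (y - x)) - g x, y - x⟫ - β * t * ‖y - x‖ ^ 2) t := by
    intro t
    have h1 := grad_line hd x y t
    have h2 : HasDerivAt (fun s : ℝ => s * ⟪g x, y - x⟫) ⟪g x, y - x⟫ t := by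
      simpa using (hasDerivAt_id t).mul_const ⟪g x, y - x⟫
    have h3 : HasDerivAt (fun s : ℝ => β / 2 * s ^ 2 * ‖y - x‖ ^ 2)
        (β * t * ‖y - x‖ ^ 2) t := by
      have := ((hasDerivAt_pow 2 t).const_mul (β / 2)).mul_const (‖y - x‖ ^ 2)
      refine this.congr_deriv ?_
      ring
    have := (h1.sub h2).sub h3
    refine this.congr_deriv ?_
    rw [inner_sub_left]
  have hanti : AntitoneOn ψ (Set.Icc 0 1) := by
    apply antitoneOn_of_deriv_nonpos (convex_Icc 0 1)
    · exact fun t _ => (hder t).continuousAt.continuousWithinAt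
    · exact fun t _ => (hder t).differentiableAt.differentiableWithinAt
    · intro t ht
      rw [interior_Icc] at ht
      rw [(hder t).deriv]
      have hb : ⟪g (x + t • (y - x)) - g x, y - x⟫ ≤ β * t * ‖y - x‖ ^ 2 := by
        calc ⟪g (x + t • (y - x)) - g x, y - x⟫ ≤ ‖g (x + t • (y - x)) - g x‖ * ‖y - x‖ :=
              real_inner_le_norm _ _
          _ ≤ β * ‖(x + t • (y - x)) - x‖ * ‖y - x‖ := by
              have := hs (x + t • (y - x)) x
              nlinarith [norm_nonneg (y - x)]
          _ = β * t * ‖y - x‖ ^ 2 := by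
              rw [add_sub_cancel_left, norm_smul, Real.norm_eq_abs, abs_of_pos ht.1]; ring
      linarith
  have h01 := hanti (Set.mem_Icc.2 ⟨le_refl 0, zero_le_one⟩)
    (Set.mem_Icc.2 ⟨zero_le_one, le_refl 1⟩) zero_le_one
  simp only [ψ, zero_smul, add_zero, one_smul, add_sub_cancel, zero_mul, sub_zero, one_pow,
    mul_one, zero_pow, mul_zero] at h01
  linarith

lemma half_coco {φ : H → ℝ} {g : H → H} {β : ℝ} (hβ : 0 < β)
    (hd : ∀ x, HasFDerivAt φ ((innerSL ℝ) (g x)) x)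
    (hs : ∀ x y, ‖g x - g y‖ ≤ β * ‖x - y‖) (hc : ConvexOn ℝ Set.univ φ) (x y : H) :
    φ x + ⟪g x, y - x⟫ + 1 / (2 * β) * ‖g y - g x‖ ^ 2 ≤ φ y := by
  set d := g y - g x with hdd
  set z₀ := y - β⁻¹ • d with hz
  have hA := grad_ineq hd hc x z₀
  have hB := descent hβ hd hs y z₀
  have e1 : ⟪g y, z₀ - y⟫ = -β⁻¹ * ⟪g y, d⟫ := by
    rw [hz, sub_sub_cancel_left, inner_neg_right, inner_smul_right]; ring
  have e2 : ‖z₀ - y‖ ^ 2 = β⁻¹ ^ 2 * ‖d‖ ^ 2 := by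
    rw [hz, sub_sub_cancel_left, norm_neg, norm_smul, mul_pow, Real.norm_eq_abs, sq_abs]
  have e3 : ⟪g x, z₀ - x⟫ = ⟪g x, y - x⟫ - β⁻¹ * ⟪g x, d⟫ := by
    rw [hz, sub_right_comm, inner_sub_right, inner_smul_right]
  have e4 : ⟪g y, d⟫ - ⟪g x, d⟫ = ‖d‖ ^ 2 := by
    rw [← inner_sub_left, ← hdd, real_inner_self_eq_norm_sq]
  rw [e1, e2] at hB
  rw [e3] at hA
  have hq : β / 2 * (β⁻¹ ^ 2 * ‖d‖ ^ 2) = β⁻¹ / 2 * ‖d‖ ^ 2 := by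
    field_simp
  have hg : 1 / (2 * β) = β⁻¹ / 2 := by field_simp
  rw [hq] at hB
  rw [hg]
  have e5 : β⁻¹ * ⟪g y, d⟫ - β⁻¹ * ⟪g x, d⟫ = β⁻¹ * ‖d‖ ^ 2 := by
    rw [← mul_sub, e4]
  linarith

lemma coco {φ : H → ℝ} {g : H → H} {β : ℝ} (hβ : 0 < β)
    (hd : ∀ x, HasFDerivAt φ ((innerSL ℝ) (g x)) x)
    (hs : ∀ x y, ‖g x - g y‖ ≤ β * ‖x - y‖) (hc : ConvexOn ℝ Set.univ φ) (x y : H) :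
    β⁻¹ * ‖g x - g y‖ ^ 2 ≤ ⟪g x - g y, x - y⟫ := by
  have h1 := half_coco hβ hd hs hc x y
  have h2 := half_coco hβ hd hs hc y x
  have e : ⟪g x, y - x⟫ + ⟪g y, x - y⟫ = -⟪g x - g y, x - y⟫ := by
    have : (y - x) = -(x - y) := by abel
    rw [this, inner_neg_right, inner_sub_left]; ring
  have e2 : ‖g y - g x‖ = ‖g x - g y‖ := by rw [← norm_neg]; congr 1; abel
  rw [e2] at h1
  have hg : 1 / (2 * β) = β⁻¹ / 2 := by field_simp
  rw [hg] at h1 h2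
  linarith

end aux2
section aux3
variable {H : Type*} [NormedAddCommGroup H] [InnerProductSpace ℝ H]

lemma step_nonexp {Z : Type*} (f' : Z → H → H) {β η : ℝ} (hβ : 0 < β)
    (hη0 : 0 < η) (hηβ : η ≤ 2 / β)
    (hco : ∀ (z : Z) (x y : H), β⁻¹ * ‖f' z x - f' z y‖ ^ 2 ≤ ⟪f' z x - f' z y, x - y⟫)
    {m : ℕ} (hm : 1 ≤ m) (z : Fin m → Z) (x y : H) :
    ‖(x - y) - (η * (m : ℝ)⁻¹) • ∑ i, (f' (z i) x - f' (z i) y)‖ ≤ ‖x - y‖ := by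
  have hm' : (0:ℝ) < m := by exact_mod_cast hm
  set c := η * (m : ℝ)⁻¹ with hc
  have hc0 : 0 < c := by positivity
  set d := ∑ i, (f' (z i) x - f' (z i) y) with hd
  set Ssq := ∑ i, ‖f' (z i) x - f' (z i) y‖ ^ 2 with hSsq
  have hSsq0 : 0 ≤ Ssq := Finset.sum_nonneg fun i _ => sq_nonneg _
  have hcoc : β⁻¹ * Ssq ≤ ⟪d, x - y⟫ := by
    rw [hd, sum_inner, hSsq, Finset.mul_sum]
    exact Finset.sum_le_sum fun i _ => hco (z i) x y
  have hjen : ‖d‖ ^ 2 ≤ (m : ℝ) * Ssq := by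
    have h1 : ‖d‖ ≤ ∑ i, ‖f' (z i) x - f' (z i) y‖ := norm_sum_le _ _
    have h2 : (∑ i, ‖f' (z i) x - f' (z i) y‖) ^ 2 ≤ (m : ℝ) * Ssq := by
      have := sq_sum_le_card_mul_sum_sq (s := (Finset.univ : Finset (Fin m)))
        (f := fun i => ‖f' (z i) x - f' (z i) y‖)
      simpa [hSsq] using this
    nlinarith [norm_nonneg d]
  have hsq : ‖(x - y) - c • d‖ ^ 2 = ‖x - y‖ ^ 2 - 2 * c * ⟪d, x - y⟫ + c ^ 2 * ‖d‖ ^ 2 := by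
    rw [norm_sub_sq_real, real_inner_smul_right, norm_smul, Real.norm_eq_abs, mul_pow, sq_abs,
      real_inner_comm]
    ring
  have hkey : c ^ 2 * ‖d‖ ^ 2 ≤ 2 * c * (β⁻¹ * Ssq) := by
    have h1 : c ^ 2 * ‖d‖ ^ 2 ≤ c ^ 2 * ((m:ℝ) * Ssq) := by nlinarith [sq_nonneg c]
    have h2 : c ^ 2 * ((m:ℝ) * Ssq) = (c * η) * Ssq := by
      rw [hc]; field_simp
    have h3 : η ≤ 2 * β⁻¹ := by rw [div_eq_mul_inv] at hηβ; linarith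
    nlinarith [mul_le_mul_of_nonneg_left h3 hc0.le, hSsq0]
  have hfin : ‖(x - y) - c • d‖ ^ 2 ≤ ‖x - y‖ ^ 2 := by nlinarith [hcoc]
  nlinarith [norm_nonneg ((x - y) - c • d), norm_nonneg (x - y)]

end aux3
section aux4
variable {H : Type*} [NormedAddCommGroup H] [InnerProductSpace ℝ H]

lemma l2_triangle {m : ℕ} (u w : Fin m → H) :
    Real.sqrt (∑ i, ‖u i + w i‖ ^ 2) ≤
      Real.sqrt (∑ i, ‖u i‖ ^ 2) + Real.sqrt (∑ i, ‖w i‖ ^ 2) := by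
  let U : PiLp 2 (fun _ : Fin m => H) := WithLp.toLp 2 u
  let W : PiLp 2 (fun _ : Fin m => H) := WithLp.toLp 2 w
  have := norm_add_le U W
  simpa [PiLp.norm_eq_of_L2] using this

lemma sum_le_sqrt_card_mul {m : ℕ} (a : Fin m → ℝ) (ha : ∀ i, 0 ≤ a i) :
    ∑ i, a i ≤ Real.sqrt m * Real.sqrt (∑ i, (a i) ^ 2) := by
  have h := sq_sum_le_card_mul_sum_sq (s := (Finset.univ : Finset (Fin m))) (f := a)
  have h0 : 0 ≤ ∑ i, a i := Finset.sum_nonneg fun i _ => ha i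
  calc ∑ i, a i = Real.sqrt ((∑ i, a i) ^ 2) := (Real.sqrt_sq h0).symm
    _ ≤ Real.sqrt ((m : ℝ) * ∑ i, (a i) ^ 2) := by
        apply Real.sqrt_le_sqrt
        simpa using h
    _ = Real.sqrt m * Real.sqrt (∑ i, (a i) ^ 2) := Real.sqrt_mul (by positivity) _

lemma sum_gossip {m : ℕ} (P : Fin m → Fin m → ℝ) (hPsym : ∀ i l, P i l = P l i)
    (hProw : ∀ i, ∑ l, P i l = 1) (x : Fin m → H) :
    ∑ i, ∑ l, P i l • x l = ∑ l, x l := by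
  rw [Finset.sum_comm]
  have : ∀ l, ∑ i, P i l • x l = x l := by
    intro l
    rw [← Finset.sum_smul]
    have : ∑ i, P i l = 1 := by
      rw [Finset.sum_congr rfl fun i _ => hPsym i l]
      exact hProw l
    rw [this, one_smul]
  exact Finset.sum_congr rfl fun l _ => this l

lemma avg_const {m : ℕ} (hm : 1 ≤ m) (x : H) : (m : ℝ)⁻¹ • ∑ _i : Fin m, x = x := by
  have hm' : (m : ℝ) ≠ 0 := by positivity
  rw [Finset.sum_const, Finset.card_univ, Fintype.card_fin, ← Nat.cast_smul_eq_nsmul ℝ,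
    smul_smul, inv_mul_cancel₀ hm', one_smul]

lemma sum_dev_zero {m : ℕ} (hm : 1 ≤ m) (x : Fin m → H) :
    ∑ i, (x i - (m : ℝ)⁻¹ • ∑ l, x l) = 0 := by
  have hm' : (m : ℝ) ≠ 0 := by positivity
  rw [Finset.sum_sub_distrib, Finset.sum_const, Finset.card_univ, Fintype.card_fin,
    ← Nat.cast_smul_eq_nsmul ℝ, smul_smul, mul_inv_cancel₀ hm', one_smul, sub_self]

lemma grad_dev_l2 {m : ℕ} (hm : 1 ≤ m) {L : ℝ} (hL : 0 ≤ L) (g : Fin m → H)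
    (hg : ∀ i, ‖g i‖ ≤ L) :
    Real.sqrt (∑ i, ‖g i - (m : ℝ)⁻¹ • ∑ l, g l‖ ^ 2) ≤ Real.sqrt m * L := by
  set gb := (m : ℝ)⁻¹ • ∑ l, g l with hgb
  have hsum : ∑ l, g l = (m : ℝ) • gb := by
    rw [hgb, smul_smul, mul_inv_cancel₀ (by positivity : (m:ℝ) ≠ 0), one_smul]
  have hexp : ∑ i, ‖g i - gb‖ ^ 2 = (∑ i, ‖g i‖ ^ 2) - (m : ℝ) * ‖gb‖ ^ 2 := by
    have : ∀ i, ‖g i - gb‖ ^ 2 = ‖g i‖ ^ 2 - 2 * ⟪g i, gb⟫ + ‖gb‖ ^ 2 := fun i =>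
      norm_sub_sq_real _ _
    rw [Finset.sum_congr rfl fun i _ => this i]
    rw [Finset.sum_add_distrib, Finset.sum_sub_distrib, ← Finset.mul_sum, ← sum_inner, hsum,
      real_inner_smul_left, real_inner_self_eq_norm_sq, Finset.sum_const, Finset.card_univ,
      Fintype.card_fin, nsmul_eq_mul]
    ring
  have hsum2 : ∑ i, ‖g i‖ ^ 2 ≤ (m : ℝ) * L ^ 2 := by
    calc ∑ i, ‖g i‖ ^ 2 ≤ ∑ _i : Fin m, L ^ 2 :=
          Finset.sum_le_sum fun i _ => by nlinarith [hg i, norm_nonneg (g i)]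
      _ = (m : ℝ) * L ^ 2 := by
          rw [Finset.sum_const, Finset.card_univ, Fintype.card_fin, nsmul_eq_mul]
  calc Real.sqrt (∑ i, ‖g i - gb‖ ^ 2) ≤ Real.sqrt ((m : ℝ) * L ^ 2) := by
        apply Real.sqrt_le_sqrt
        rw [hexp]
        nlinarith [sq_nonneg ‖gb‖, (by exact_mod_cast hm : (1:ℝ) ≤ m)]
      _ = Real.sqrt m * L := by
        rw [Real.sqrt_mul (by positivity), Real.sqrt_sq hL]

end aux4
section aux5
variable {H : Type*} [NormedAddCommGroup H] [InnerProductSpace ℝ H]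

lemma consensus {Z : Type*} (f' : Z → H → H) {L η lam : ℝ} (hL : 0 < L) (hη0 : 0 < η)
    (hgradbd : ∀ (z : Z) (x : H), ‖f' z x‖ ≤ L)
    {m T : ℕ} (hm : 1 ≤ m)
    (P : Fin m → Fin m → ℝ) (hPsym : ∀ i l, P i l = P l i) (hProw : ∀ i, ∑ l, P i l = 1)
    (hlam0 : 0 ≤ lam) (hlam1 : lam < 1)
    (hspec : ∀ vv : Fin m → H, ∑ i, vv i = 0 →
      Real.sqrt (∑ i, ‖∑ l, P i l • vv l‖ ^ 2) ≤ lam * Real.sqrt (∑ i, ‖vv i‖ ^ 2))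
    (ζ : ℕ → Fin m → Z) (w₀ : H) (w : ℕ → Fin m → H) (hw1 : ∀ i, w 1 i = w₀)
    (hrec : ∀ t, 1 ≤ t → t ≤ T → ∀ i,
      w (t + 1) i = ∑ l, P i l • w t l - η • f' (ζ t i) (w t i)) :
    ∀ t, 1 ≤ t → t ≤ T + 1 →
      Real.sqrt (∑ i, ‖w t i - (m : ℝ)⁻¹ • ∑ l, w t l‖ ^ 2) ≤
        η * L * Real.sqrt m / (1 - lam) := by
  have h1ml : (0:ℝ) < 1 - lam := by linarith
  have hBnn : 0 ≤ η * L * Real.sqrt m / (1 - lam) :=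
    div_nonneg (mul_nonneg (mul_nonneg hη0.le hL.le) (Real.sqrt_nonneg _)) h1ml.le
  intro t ht1
  induction t, ht1 using Nat.le_induction with
  | base =>
    intro _
    have hz : ∀ i : Fin m, w 1 i - (m : ℝ)⁻¹ • ∑ l, w 1 l = 0 := by
      intro i
      have hs : ∑ l, w 1 l = ∑ _l : Fin m, w₀ := Finset.sum_congr rfl fun l _ => hw1 l
      rw [hw1 i, hs, avg_const hm, sub_self]
    rw [Finset.sum_congr rfl fun i _ => by rw [hz i, norm_zero]]
    simpa using hBnn
  | succ t ht ih =>
    intro htT1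
    have htT : t ≤ T := by omega
    have hIH := ih (by omega)
    set g : Fin m → H := fun i => f' (ζ t i) (w t i) with hg
    set wb := (m : ℝ)⁻¹ • ∑ l, w t l with hwb
    set gb := (m : ℝ)⁻¹ • ∑ l, g l with hgb
    set u : Fin m → H := fun i => w t i - wb with hu
    have hsum0 : ∑ i, u i = 0 := sum_dev_zero hm _
    have hnewsum : ∑ i, w (t + 1) i = ∑ l, w t l - η • ∑ l, g l := by
      rw [Finset.sum_congr rfl fun i _ => hrec t ht htT i, Finset.sum_sub_distrib,
        sum_gossip P hPsym hProw, ← Finset.smul_sum]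
    have hnewbar : (m : ℝ)⁻¹ • ∑ l, w (t + 1) l = wb - η • gb := by
      rw [hnewsum, smul_sub, hwb, hgb, smul_comm]
    have hdev : ∀ i, w (t + 1) i - (m : ℝ)⁻¹ • ∑ l, w (t + 1) l =
        (∑ l, P i l • u l) + (-η) • (g i - gb) := by
      intro i
      rw [hnewbar, hrec t ht htT i]
      have h1 : ∑ l, P i l • u l = (∑ l, P i l • w t l) - wb := by
        have he : ∀ l, P i l • u l = P i l • w t l - P i l • wb := fun l => smul_sub _ _ _
        rw [Finset.sum_congr rfl fun l _ => he l, Finset.sum_sub_distrib, ← Finset.sum_smul,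
          hProw i, one_smul]
      rw [h1, neg_smul, smul_sub]
      abel
    have hsmul : Real.sqrt (∑ i, ‖(-η) • (g i - gb)‖ ^ 2) =
        η * Real.sqrt (∑ i, ‖g i - gb‖ ^ 2) := by
      have he : ∀ i : Fin m, ‖(-η) • (g i - gb)‖ ^ 2 = η ^ 2 * ‖g i - gb‖ ^ 2 := by
        intro i
        rw [norm_smul, Real.norm_eq_abs, abs_neg, mul_pow, sq_abs]
      rw [Finset.sum_congr rfl fun i _ => he i, ← Finset.mul_sum,
        Real.sqrt_mul (sq_nonneg η), Real.sqrt_sq hη0.le]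
    calc Real.sqrt (∑ i, ‖w (t+1) i - (m : ℝ)⁻¹ • ∑ l, w (t+1) l‖ ^ 2)
        = Real.sqrt (∑ i, ‖(∑ l, P i l • u l) + (-η) • (g i - gb)‖ ^ 2) := by
          rw [Finset.sum_congr rfl fun i _ => by rw [hdev i]]
      _ ≤ Real.sqrt (∑ i, ‖∑ l, P i l • u l‖ ^ 2) +
            Real.sqrt (∑ i, ‖(-η) • (g i - gb)‖ ^ 2) := l2_triangle _ _
      _ ≤ lam * Real.sqrt (∑ i, ‖u i‖ ^ 2) + η * Real.sqrt (∑ i, ‖g i - gb‖ ^ 2) := by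
          rw [hsmul]
          exact add_le_add_left (hspec u hsum0) _
      _ ≤ lam * (η * L * Real.sqrt m / (1 - lam)) + η * (Real.sqrt m * L) := by
          apply add_le_add
          · exact mul_le_mul_of_nonneg_left hIH hlam0
          · exact mul_le_mul_of_nonneg_left
              (grad_dev_l2 hm hL.le g fun i => hgradbd _ _) hη0.le
      _ ≤ η * L * Real.sqrt m / (1 - lam) := by
          have : lam * (η * L * Real.sqrt m / (1 - lam)) + η * (Real.sqrt m * L) =
              η * L * Real.sqrt m / (1 - lam) := by
            field_simp
            ring
          linarith

end aux5
section aux6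
variable {H : Type*} [NormedAddCommGroup H] [InnerProductSpace ℝ H]

lemma avg_step {m : ℕ} (P : Fin m → Fin m → ℝ) (hPsym : ∀ i l, P i l = P l i)
    (hProw : ∀ i, ∑ l, P i l = 1) (x g : Fin m → H) (η : ℝ) :
    (m : ℝ)⁻¹ • ∑ i, (∑ l, P i l • x l - η • g i) =
      (m : ℝ)⁻¹ • ∑ i, x i - η • ((m : ℝ)⁻¹ • ∑ i, g i) := by
  rw [Finset.sum_sub_distrib, sum_gossip P hPsym hProw, ← Finset.smul_sum, smul_sub, smul_comm]

end aux6

/-- convex case, constant stepsize, averaged iterates. -/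
theorem dsgd_stability_convex_averaged
    {H : Type*} [NormedAddCommGroup H] [InnerProductSpace ℝ H]
    {Z : Type*} (f : Z → H → ℝ) (f' : Z → H → H)
    (L β : ℝ) (hL : 0 < L) (hβ : 0 < β)
    (hdiff : ∀ (z : Z) (x : H), HasFDerivAt (f z) ((innerSL ℝ) (f' z x)) x)
    (hlip : ∀ (z : Z) (x y : H), |f z x - f z y| ≤ L * ‖x - y‖)
    (hgradbd : ∀ (z : Z) (x : H), ‖f' z x‖ ≤ L)
    (hsmooth : ∀ (z : Z) (x y : H), ‖f' z x - f' z y‖ ≤ β * ‖x - y‖)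
    (hconv : ∀ z : Z, ConvexOn ℝ Set.univ (f z))
    (m n T : ℕ) (hm : 1 ≤ m) (hn : 1 ≤ n) (hT : 1 ≤ T)
    (P : Fin m → Fin m → ℝ)
    (hPsym : ∀ i l, P i l = P l i)
    (hPpos : ∀ i l, 0 ≤ P i l)
    (hProw : ∀ i, ∑ l, P i l = 1)
    (lam : ℝ) (hlam0 : 0 ≤ lam) (hlam1 : lam < 1)
    (hspec : ∀ vv : Fin m → H, ∑ i, vv i = 0 →
      Real.sqrt (∑ i, ‖∑ l, P i l • vv l‖ ^ 2) ≤ lam * Real.sqrt (∑ i, ‖vv i‖ ^ 2))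
    (r : Fin m) (k : Fin n)
    (S S' : Fin m → Fin n → Z)
    (hSS' : ∀ (r' : Fin m) (k' : Fin n), (r', k') ≠ (r, k) → S' r' k' = S r' k')
    (j : ℕ → Fin m → Fin n)
    (η : ℝ) (hη0 : 0 < η) (hηβ : η ≤ 2 / β)
    (w₀ : H) (w v : ℕ → Fin m → H)
    (hw1 : ∀ i, w 1 i = w₀) (hv1 : ∀ i, v 1 i = w₀)
    (hwrec : ∀ t, 1 ≤ t → t ≤ T → ∀ i,
      w (t + 1) i = ∑ l, P i l • w t l - η • f' (S i (j t i)) (w t i))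
    (hvrec : ∀ t, 1 ≤ t → t ≤ T → ∀ i,
      v (t + 1) i = ∑ l, P i l • v t l - η • f' (S' i (j t i)) (v t i))
    :
    ∀ z : Z,
      |f z (((T : ℝ) + 1)⁻¹ • ∑ t ∈ Finset.Icc 1 (T + 1), (m : ℝ)⁻¹ • ∑ i, w t i) -
          f z (((T : ℝ) + 1)⁻¹ • ∑ t ∈ Finset.Icc 1 (T + 1), (m : ℝ)⁻¹ • ∑ i, v t i)| ≤
        2 * η ^ 2 * β * L ^ 2 * T / (1 - lam)
          + 2 * η * L ^ 2 / (((T : ℝ) + 1) * m) *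
            ∑ t ∈ Finset.Icc 1 T, ((T : ℝ) + 1 - (t : ℝ)) * (if j t r = k then (1 : ℝ) else 0) := by
  intro z
  have hm0 : (0:ℝ) < m := by exact_mod_cast hm
  have hm0' : (m:ℝ) ≠ 0 := hm0.ne'
  have h1ml : (0:ℝ) < 1 - lam := by linarith
  have hmm : Real.sqrt m * Real.sqrt m = (m:ℝ) := Real.mul_self_sqrt hm0.le
  set wb : ℕ → H := fun t => (m : ℝ)⁻¹ • ∑ i, w t i with hwbdef
  set vb : ℕ → H := fun t => (m : ℝ)⁻¹ • ∑ i, v t i with hvbdef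
  set χ : ℕ → ℝ := fun t => if j t r = k then (1:ℝ) else 0 with hχdef
  have hχnn : ∀ t, 0 ≤ χ t := fun t => by by_cases h : j t r = k <;> simp [χ, h]
  set C : ℝ := 2 * η ^ 2 * β * L / (1 - lam) with hCdef
  have hC0 : 0 ≤ C := by positivity
  have hco : ∀ (z : Z) (x y : H), β⁻¹ * ‖f' z x - f' z y‖ ^ 2 ≤ ⟪f' z x - f' z y, x - y⟫ :=
    fun z x y => coco hβ (hdiff z) (fun a b => hsmooth z a b) (hconv z) x y
  -- consensus bounds
  have hconsW := consensus f' hL hη0 hgradbd hm P hPsym hProw hlam0 hlam1 hspec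
    (fun t i => S i (j t i)) w₀ w hw1 hwrec
  have hconsV := consensus f' hL hη0 hgradbd hm P hPsym hProw hlam0 hlam1 hspec
    (fun t i => S' i (j t i)) w₀ v hv1 hvrec
  -- per-step bound
  have hstep : ∀ t, 1 ≤ t → t ≤ T →
      ‖wb (t+1) - vb (t+1)‖ ≤ ‖wb t - vb t‖ + C + (2*η*L/(m:ℝ)) * χ t := by
    intro t ht1 htT
    set Wb := wb t with hWb
    set Vb := vb t with hVb
    set gw : Fin m → H := fun i => f' (S i (j t i)) (w t i) with hgw
    set gv : Fin m → H := fun i => f' (S' i (j t i)) (v t i) with hgv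
    set gd : Fin m → H := fun i => f' (S i (j t i)) Wb - f' (S i (j t i)) Vb with hgd
    set e : Fin m → H := fun i => (gw i - gv i) - gd i with he
    -- average evolution
    have hwb1 : wb (t+1) = Wb - η • ((m : ℝ)⁻¹ • ∑ i, gw i) := by
      show (m : ℝ)⁻¹ • ∑ i, w (t+1) i = _
      rw [Finset.sum_congr rfl fun i _ => hwrec t ht1 htT i]
      exact avg_step P hPsym hProw _ _ _
    have hvb1 : vb (t+1) = Vb - η • ((m : ℝ)⁻¹ • ∑ i, gv i) := by
      show (m : ℝ)⁻¹ • ∑ i, v (t+1) i = _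
      rw [Finset.sum_congr rfl fun i _ => hvrec t ht1 htT i]
      exact avg_step P hPsym hProw _ _ _
    -- decomposition
    have hsplit : ∑ i, (gw i - gv i) = (∑ i, gd i) + ∑ i, e i := by
      rw [← Finset.sum_add_distrib]
      refine Finset.sum_congr rfl fun i _ => ?_
      simp only [he]
      abel
    have hkey : wb (t+1) - vb (t+1) =
        ((Wb - Vb) - (η * (m : ℝ)⁻¹) • ∑ i, gd i) - (η * (m : ℝ)⁻¹) • ∑ i, e i := by
      rw [hwb1, hvb1]
      have h2 : (∑ i, gw i) - (∑ i, gv i) = (∑ i, gd i) + ∑ i, e i := by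
        rw [← hsplit, Finset.sum_sub_distrib]
      calc Wb - η • ((m:ℝ)⁻¹ • ∑ i, gw i) - (Vb - η • ((m:ℝ)⁻¹ • ∑ i, gv i))
          = (Wb - Vb) - η • ((m:ℝ)⁻¹ • ((∑ i, gw i) - (∑ i, gv i))) := by
            rw [smul_sub, smul_sub]
            abel
        _ = ((Wb - Vb) - (η * (m : ℝ)⁻¹) • ∑ i, gd i) - (η * (m : ℝ)⁻¹) • ∑ i, e i := by
            rw [h2, smul_add, smul_add, mul_smul, mul_smul]
            abel
    -- nonexpansive part
    have hne : ‖(Wb - Vb) - (η * (m : ℝ)⁻¹) • ∑ i, gd i‖ ≤ ‖Wb - Vb‖ := by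
      have := step_nonexp f' hβ hη0 hηβ hco hm (fun i => S i (j t i)) Wb Vb
      simpa [hgd] using this
    -- error bounds
    have hei : ∀ i, ‖e i‖ ≤ β * ‖w t i - Wb‖ + β * ‖v t i - Vb‖
        + (if i = r ∧ j t i = k then 2*L else 0) := by
      intro i
      have hdecomp : e i = (f' (S i (j t i)) (w t i) - f' (S i (j t i)) Wb)
          - (f' (S' i (j t i)) (v t i) - f' (S' i (j t i)) Vb)
          - (f' (S' i (j t i)) Vb - f' (S i (j t i)) Vb) := by
        simp only [he, hgd, hgw, hgv]
        abel
      have h3 : ‖f' (S' i (j t i)) Vb - f' (S i (j t i)) Vb‖ ≤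
          (if i = r ∧ j t i = k then 2*L else 0) := by
        by_cases hik : i = r ∧ j t i = k
        · rw [if_pos hik]
          calc ‖f' (S' i (j t i)) Vb - f' (S i (j t i)) Vb‖
              ≤ ‖f' (S' i (j t i)) Vb‖ + ‖f' (S i (j t i)) Vb‖ := norm_sub_le _ _
            _ ≤ L + L := add_le_add (hgradbd _ _) (hgradbd _ _)
            _ = 2*L := by ring
        · rw [if_neg hik, hSS' i (j t i) (by simpa [Prod.ext_iff] using hik), sub_self,
            norm_zero]
      have htri : ‖e i‖ ≤ ‖f' (S i (j t i)) (w t i) - f' (S i (j t i)) Wb‖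
          + ‖f' (S' i (j t i)) (v t i) - f' (S' i (j t i)) Vb‖
          + ‖f' (S' i (j t i)) Vb - f' (S i (j t i)) Vb‖ := by
        rw [hdecomp]
        exact (norm_sub_le _ _).trans (add_le_add_left (norm_sub_le _ _) _)
      exact htri.trans (add_le_add (add_le_add (hsmooth _ _ _) (hsmooth _ _ _)) h3)
    -- indicator sum
    have hind : ∑ i, (if i = r ∧ j t i = k then 2*L else 0) = 2*L*χ t := by
      have hper : ∀ i : Fin m, (if i = r ∧ j t i = k then 2*L else 0)
          = (if i = r then 2*L*χ t else 0) := by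
        intro i
        by_cases hir : i = r
        · subst hir
          by_cases hjk : j t i = k <;> simp [hjk, χ]
        · simp [hir]
      rw [Finset.sum_congr rfl fun i _ => hper i, Finset.sum_ite_eq' Finset.univ r]
      simp
    -- consensus sums
    have hSw : ∑ i, ‖w t i - Wb‖ ≤ (m:ℝ) * η * L / (1 - lam) := by
      calc ∑ i, ‖w t i - Wb‖
          ≤ Real.sqrt m * Real.sqrt (∑ i, ‖w t i - Wb‖ ^ 2) :=
            sum_le_sqrt_card_mul _ fun i => norm_nonneg _
        _ ≤ Real.sqrt m * (η * L * Real.sqrt m / (1 - lam)) := by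
            apply mul_le_mul_of_nonneg_left _ (Real.sqrt_nonneg _)
            exact hconsW t ht1 (by omega)
        _ = (m:ℝ) * η * L / (1 - lam) := by
            field_simp
            linear_combination hmm
    have hSv : ∑ i, ‖v t i - Vb‖ ≤ (m:ℝ) * η * L / (1 - lam) := by
      calc ∑ i, ‖v t i - Vb‖
          ≤ Real.sqrt m * Real.sqrt (∑ i, ‖v t i - Vb‖ ^ 2) :=
            sum_le_sqrt_card_mul _ fun i => norm_nonneg _
        _ ≤ Real.sqrt m * (η * L * Real.sqrt m / (1 - lam)) := by
            apply mul_le_mul_of_nonneg_left _ (Real.sqrt_nonneg _)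
            exact hconsV t ht1 (by omega)
        _ = (m:ℝ) * η * L / (1 - lam) := by
            field_simp
            linear_combination hmm
    have hesum : ∑ i, ‖e i‖ ≤ 2 * β * ((m:ℝ) * η * L / (1 - lam)) + 2*L*χ t := by
      calc ∑ i, ‖e i‖ ≤ ∑ i, (β * ‖w t i - Wb‖ + β * ‖v t i - Vb‖
            + (if i = r ∧ j t i = k then 2*L else 0)) :=
            Finset.sum_le_sum fun i _ => hei i
        _ = β * (∑ i, ‖w t i - Wb‖) + β * (∑ i, ‖v t i - Vb‖)
            + ∑ i, (if i = r ∧ j t i = k then 2*L else 0) := by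
            rw [Finset.sum_add_distrib, Finset.sum_add_distrib, ← Finset.mul_sum,
              ← Finset.mul_sum]
        _ ≤ β * ((m:ℝ) * η * L / (1 - lam)) + β * ((m:ℝ) * η * L / (1 - lam)) + 2*L*χ t := by
            rw [hind]
            exact add_le_add_left (add_le_add (mul_le_mul_of_nonneg_left hSw hβ.le)
              (mul_le_mul_of_nonneg_left hSv hβ.le)) _
        _ = 2 * β * ((m:ℝ) * η * L / (1 - lam)) + 2*L*χ t := by ring
    -- combine
    have hη0m : 0 ≤ η * (m:ℝ)⁻¹ := by positivity
    calc ‖wb (t+1) - vb (t+1)‖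
        ≤ ‖(Wb - Vb) - (η * (m : ℝ)⁻¹) • ∑ i, gd i‖ + ‖(η * (m : ℝ)⁻¹) • ∑ i, e i‖ := by
          rw [hkey]
          exact norm_sub_le _ _
      _ ≤ ‖Wb - Vb‖ + (η * (m:ℝ)⁻¹) * ∑ i, ‖e i‖ := by
          apply add_le_add hne
          rw [norm_smul, Real.norm_eq_abs, abs_of_nonneg hη0m]
          exact mul_le_mul_of_nonneg_left (norm_sum_le _ _) hη0m
      _ ≤ ‖Wb - Vb‖ + (η * (m:ℝ)⁻¹) * (2 * β * ((m:ℝ) * η * L / (1 - lam)) + 2*L*χ t) := by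
          exact add_le_add_right (mul_le_mul_of_nonneg_left hesum hη0m) _
      _ = ‖Wb - Vb‖ + C + (2*η*L/(m:ℝ)) * χ t := by
          rw [hCdef]
          field_simp
          ring
  -- induction
  have hDb : ∀ t, t ≤ T →
      ‖wb (t+1) - vb (t+1)‖ ≤ (t:ℝ) * C + (2*η*L/(m:ℝ)) * ∑ s ∈ Finset.Icc 1 t, χ s := by
    intro t
    induction t with
    | zero =>
      intro _
      have hwb1 : wb 1 = w₀ := by
        show (m : ℝ)⁻¹ • ∑ i, w 1 i = w₀
        rw [Finset.sum_congr rfl fun i _ => hw1 i, avg_const hm]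
      have hvb1 : vb 1 = w₀ := by
        show (m : ℝ)⁻¹ • ∑ i, v 1 i = w₀
        rw [Finset.sum_congr rfl fun i _ => hv1 i, avg_const hm]
      rw [hwb1, hvb1, sub_self, norm_zero]
      simp
    | succ t ih =>
      intro htT
      have h1 := hstep (t+1) (by omega) htT
      have h2 := ih (by omega)
      have h3 : ∑ s ∈ Finset.Icc 1 (t+1), χ s = (∑ s ∈ Finset.Icc 1 t, χ s) + χ (t+1) :=
        Finset.sum_Icc_succ_top (by omega) χ
      rw [h3, mul_add]
      push_cast
      linarith
  -- final assembly
  have hT1 : (0:ℝ) < (T:ℝ) + 1 := by positivity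
  have hXY : (((T : ℝ) + 1)⁻¹ • ∑ t ∈ Finset.Icc 1 (T + 1), wb t) -
      (((T : ℝ) + 1)⁻¹ • ∑ t ∈ Finset.Icc 1 (T + 1), vb t) =
      ((T : ℝ) + 1)⁻¹ • ∑ t ∈ Finset.Icc 1 (T + 1), (wb t - vb t) := by
    rw [← smul_sub, ← Finset.sum_sub_distrib]
  set Sig : ℝ := ∑ s ∈ Finset.Icc 1 T, ((T:ℝ) + 1 - (s:ℝ)) * χ s with hSigdef
  have hSignn : 0 ≤ Sig := by
    apply Finset.sum_nonneg
    intro s hs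
    have hsT := (Finset.mem_Icc.1 hs).2
    have : (s:ℝ) ≤ (T:ℝ) := by exact_mod_cast hsT
    exact mul_nonneg (by linarith) (hχnn s)
  -- reindex and bound the sum of norms
  have hIcc : Finset.Icc 1 (T+1) = Finset.Ico 1 (T+2) := (Finset.Ico_add_one_right_eq_Icc 1 (T+1)).symm
  have hsumnorm : ∑ t ∈ Finset.Icc 1 (T + 1), ‖wb t - vb t‖ ≤
      (∑ i ∈ Finset.range (T+1), (i:ℝ)) * C + (2*η*L/(m:ℝ)) *
        ∑ i ∈ Finset.range (T+1), ∑ s ∈ Finset.Icc 1 i, χ s := by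
    rw [hIcc, Finset.sum_Ico_eq_sum_range]
    have hT2 : T + 2 - 1 = T + 1 := by omega
    rw [hT2]
    calc ∑ i ∈ Finset.range (T+1), ‖wb (1 + i) - vb (1 + i)‖
        ≤ ∑ i ∈ Finset.range (T+1), ((i:ℝ) * C + (2*η*L/(m:ℝ)) * ∑ s ∈ Finset.Icc 1 i, χ s) := by
          apply Finset.sum_le_sum
          intro i hi
          have hiT : i ≤ T := by
            have := Finset.mem_range.1 hi
            omega
          have := hDb i hiT
          rw [add_comm 1 i] at *
          exact this
      _ = (∑ i ∈ Finset.range (T+1), (i:ℝ)) * C + (2*η*L/(m:ℝ)) *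
            ∑ i ∈ Finset.range (T+1), ∑ s ∈ Finset.Icc 1 i, χ s := by
          rw [Finset.sum_add_distrib, ← Finset.sum_mul, ← Finset.mul_sum]
  have hgauss : ∑ i ∈ Finset.range (T+1), (i:ℝ) = (T:ℝ) * ((T:ℝ)+1)/2 := by
    have h := Finset.sum_range_id_mul_two (T+1)
    have h' : ((∑ i ∈ Finset.range (T+1), i : ℕ) : ℝ) * 2 = ((T+1) * T : ℕ) := by
      exact_mod_cast congrArg (Nat.cast (R := ℝ)) h
    rw [Nat.cast_sum] at h'
    push_cast at h'
    linarith
  have hswap : ∑ i ∈ Finset.range (T+1), ∑ s ∈ Finset.Icc 1 i, χ s = Sig := by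
    rw [hSigdef]
    rw [Finset.sum_comm' (t' := Finset.Icc 1 T) (s' := fun s => Finset.Icc s T)
      (fun x y => by simp only [Finset.mem_range, Finset.mem_Icc]; omega)]
    apply Finset.sum_congr rfl
    intro s hs
    have hs' := Finset.mem_Icc.1 hs
    rw [Finset.sum_const, Nat.card_Icc, nsmul_eq_mul]
    congr 1
    have : T + 1 - s = T - s + 1 := by omega
    rw [this]
    push_cast [Nat.cast_sub hs'.2]
    ring
  have hnormbd : ‖(((T : ℝ) + 1)⁻¹ • ∑ t ∈ Finset.Icc 1 (T + 1), wb t) -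
      (((T : ℝ) + 1)⁻¹ • ∑ t ∈ Finset.Icc 1 (T + 1), vb t)‖ ≤
      ((T : ℝ) + 1)⁻¹ * ((T:ℝ) * ((T:ℝ)+1)/2 * C + (2*η*L/(m:ℝ)) * Sig) := by
    rw [hXY, norm_smul, Real.norm_eq_abs, abs_of_pos (inv_pos.2 hT1)]
    apply mul_le_mul_of_nonneg_left _ (inv_pos.2 hT1).le
    calc ‖∑ t ∈ Finset.Icc 1 (T + 1), (wb t - vb t)‖
        ≤ ∑ t ∈ Finset.Icc 1 (T + 1), ‖wb t - vb t‖ := norm_sum_le _ _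
      _ ≤ (∑ i ∈ Finset.range (T+1), (i:ℝ)) * C + (2*η*L/(m:ℝ)) *
            ∑ i ∈ Finset.range (T+1), ∑ s ∈ Finset.Icc 1 i, χ s := hsumnorm
      _ = (T:ℝ) * ((T:ℝ)+1)/2 * C + (2*η*L/(m:ℝ)) * Sig := by rw [hgauss, hswap]
  calc |f z (((T : ℝ) + 1)⁻¹ • ∑ t ∈ Finset.Icc 1 (T + 1), (m : ℝ)⁻¹ • ∑ i, w t i) -
          f z (((T : ℝ) + 1)⁻¹ • ∑ t ∈ Finset.Icc 1 (T + 1), (m : ℝ)⁻¹ • ∑ i, v t i)|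
      ≤ L * ‖(((T : ℝ) + 1)⁻¹ • ∑ t ∈ Finset.Icc 1 (T + 1), wb t) -
          (((T : ℝ) + 1)⁻¹ • ∑ t ∈ Finset.Icc 1 (T + 1), vb t)‖ := hlip z _ _
    _ ≤ L * (((T : ℝ) + 1)⁻¹ * ((T:ℝ) * ((T:ℝ)+1)/2 * C + (2*η*L/(m:ℝ)) * Sig)) :=
        mul_le_mul_of_nonneg_left hnormbd hL.le
    _ = η^2 * β * L^2 * (T:ℝ) / (1 - lam) + 2 * η * L ^ 2 / (((T : ℝ) + 1) * m) * Sig := by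
        rw [hCdef]
        field_simp
    _ ≤ 2 * η ^ 2 * β * L ^ 2 * (T:ℝ) / (1 - lam)
          + 2 * η * L ^ 2 / (((T : ℝ) + 1) * m) * Sig := by
        have hnn : (0:ℝ) ≤ η^2 * β * L^2 * (T:ℝ) := by positivity
        have h2 : η^2 * β * L^2 * (T:ℝ) / (1 - lam) ≤
            2 * η ^ 2 * β * L ^ 2 * (T:ℝ) / (1 - lam) :=
          (div_le_div_iff_of_pos_right h1ml).2 (by nlinarith)
        linarith
end

section
/- Assume f is L-Lipschitz and β-smooth (no convexity is assumed) and P is a gossip matrix with spectral bound λ ∈ [0, 1). Then for every z ∈ 𝒵, |f(w̄^{T+1}; z) − f(v̄^{T+1}; z)| ≤ 2L² ∑_{t=1}^T ( 2βη_t ∑_{q=1}^{t−1} η_q λ^{t−q−1} + (η_t/m) 𝟙[j_t(r)=k] ) ∏_{s=t+1}^{T} (1 + βη_s), where the empty product (t = T) equals 1. -/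
/-- non-convex case, general stepsizes. -/
theorem dsgd_stability_nonconvex
    {H : Type*} [NormedAddCommGroup H] [InnerProductSpace ℝ H]
    {Z : Type*} (f : Z → H → ℝ) (f' : Z → H → H)
    (L β : ℝ) (hL : 0 < L) (hβ : 0 < β)
    (hdiff : ∀ (z : Z) (x : H), HasFDerivAt (f z) ((innerSL ℝ) (f' z x)) x)
    (hlip : ∀ (z : Z) (x y : H), |f z x - f z y| ≤ L * ‖x - y‖)
    (hgradbd : ∀ (z : Z) (x : H), ‖f' z x‖ ≤ L)
    (hsmooth : ∀ (z : Z) (x y : H), ‖f' z x - f' z y‖ ≤ β * ‖x - y‖)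
    (m n T : ℕ) (hm : 1 ≤ m) (hn : 1 ≤ n) (hT : 1 ≤ T)
    (P : Fin m → Fin m → ℝ)
    (hPsym : ∀ i l, P i l = P l i)
    (hPpos : ∀ i l, 0 ≤ P i l)
    (hProw : ∀ i, ∑ l, P i l = 1)
    (lam : ℝ) (hlam0 : 0 ≤ lam) (hlam1 : lam < 1)
    (hspec : ∀ vv : Fin m → H, ∑ i, vv i = 0 →
      Real.sqrt (∑ i, ‖∑ l, P i l • vv l‖ ^ 2) ≤ lam * Real.sqrt (∑ i, ‖vv i‖ ^ 2))
    (r : Fin m) (k : Fin n)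
    (S S' : Fin m → Fin n → Z)
    (hSS' : ∀ (r' : Fin m) (k' : Fin n), (r', k') ≠ (r, k) → S' r' k' = S r' k')
    (j : ℕ → Fin m → Fin n)
    (η : ℕ → ℝ) (hηpos : ∀ t, 1 ≤ t → t ≤ T → 0 < η t)
    (w₀ : H) (w v : ℕ → Fin m → H)
    (hw1 : ∀ i, w 1 i = w₀) (hv1 : ∀ i, v 1 i = w₀)
    (hwrec : ∀ t, 1 ≤ t → t ≤ T → ∀ i,
      w (t + 1) i = ∑ l, P i l • w t l - η t • f' (S i (j t i)) (w t i))
    (hvrec : ∀ t, 1 ≤ t → t ≤ T → ∀ i,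
      v (t + 1) i = ∑ l, P i l • v t l - η t • f' (S' i (j t i)) (v t i))
    :
    ∀ z : Z,
      |f z ((m : ℝ)⁻¹ • ∑ i, w (T + 1) i) - f z ((m : ℝ)⁻¹ • ∑ i, v (T + 1) i)| ≤
        2 * L ^ 2 * ∑ t ∈ Finset.Icc 1 T,
          (2 * β * η t * (∑ q ∈ Finset.Icc 1 (t - 1), η q * lam ^ (t - q - 1))
              + η t / m * (if j t r = k then (1 : ℝ) else 0)) *
            ∏ s ∈ Finset.Icc (t + 1) T, (1 + β * η s) := by
  intro z
  have hm0 : (0:ℝ) < m := by exact_mod_cast hm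
  have hmne : (m:ℝ) ≠ 0 := ne_of_gt hm0
  have hsmpos : 0 < Real.sqrt m := Real.sqrt_pos.mpr hm0
  have hsm : Real.sqrt m * Real.sqrt m = (m:ℝ) := Real.mul_self_sqrt hm0.le
  obtain ⟨δ, hδdef⟩ : ∃ d : ℕ → Fin m → H, d = fun t i => w t i - v t i := ⟨_, rfl⟩
  obtain ⟨db, hdbdef⟩ : ∃ d : ℕ → H, d = fun t => (m:ℝ)⁻¹ • ∑ i, δ t i := ⟨_, rfl⟩
  obtain ⟨g, hgdef⟩ : ∃ d : ℕ → Fin m → H,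
    d = fun t i => f' (S i (j t i)) (w t i) - f' (S' i (j t i)) (v t i) := ⟨_, rfl⟩
  obtain ⟨e, hedef⟩ : ∃ d : ℕ → Fin m → H, d = fun t i => δ t i - db t := ⟨_, rfl⟩
  obtain ⟨Δ, hΔdef⟩ : ∃ d : ℕ → ℝ, d = fun t => Real.sqrt (∑ i, ‖e t i‖ ^ 2) := ⟨_, rfl⟩
  obtain ⟨Sm, hSmdef⟩ : ∃ d : ℕ → ℝ,
    d = fun t => ∑ q ∈ Finset.Icc 1 (t - 1), η q * lam ^ (t - q - 1) := ⟨_, rfl⟩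
  obtain ⟨B, hBdef⟩ : ∃ d : ℕ → ℝ,
    d = fun t => 2 * β * η t * Sm t + η t / m * (if j t r = k then (1:ℝ) else 0) := ⟨_, rfl⟩
  have hδt : ∀ t i, δ t i = w t i - v t i := fun t i => by rw [hδdef]
  have hdbt : ∀ t, db t = (m:ℝ)⁻¹ • ∑ i, δ t i := fun t => by rw [hdbdef]
  have hgt : ∀ t i, g t i = f' (S i (j t i)) (w t i) - f' (S' i (j t i)) (v t i) :=
    fun t i => by rw [hgdef]
  have het : ∀ t i, e t i = δ t i - db t := fun t i => by rw [hedef]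
  have hΔt : ∀ t, Δ t = Real.sqrt (∑ i, ‖e t i‖ ^ 2) := fun t => by rw [hΔdef]
  have hSmt : ∀ t, Sm t = ∑ q ∈ Finset.Icc 1 (t - 1), η q * lam ^ (t - q - 1) :=
    fun t => by rw [hSmdef]
  have hBt' : ∀ t, B t = 2 * β * η t * Sm t + η t / m * (if j t r = k then (1:ℝ) else 0) :=
    fun t => by rw [hBdef]
  have hη0 : ∀ t, 1 ≤ t → t ≤ T → 0 ≤ η t := fun t h1 h2 => (hηpos t h1 h2).le
  -- column sums
  have hPcol : ∀ l, ∑ i, P i l = 1 := by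
    intro l
    calc ∑ i, P i l = ∑ i, P l i := by
          exact Finset.sum_congr rfl fun i _ => hPsym i l
    _ = 1 := hProw l
  have hProwS : ∀ (i : Fin m) (c : H), (∑ l, P i l • c) = c := by
    intro i c; rw [← Finset.sum_smul, hProw i, one_smul]
  -- δ recursion
  have hδrec : ∀ t, 1 ≤ t → t ≤ T → ∀ i,
      δ (t+1) i = (∑ l, P i l • δ t l) - η t • g t i := by
    intro t h1 h2 i
    simp only [hδt, hgt, hwrec t h1 h2 i, hvrec t h1 h2 i, smul_sub,
      Finset.sum_sub_distrib]
    abel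
  have hδ1 : ∀ i, δ 1 i = 0 := fun i => by simp [hδt, hw1, hv1]
  have hdb1 : db 1 = 0 := by simp [hdbt, hδ1]
  -- db recursion
  have hdbrec : ∀ t, 1 ≤ t → t ≤ T →
      db (t+1) = db t - η t • ((m:ℝ)⁻¹ • ∑ i, g t i) := by
    intro t h1 h2
    have hsum : ∑ i, δ (t+1) i = (∑ i, δ t i) - η t • ∑ i, g t i := by
      calc ∑ i, δ (t+1) i = ∑ i, ((∑ l, P i l • δ t l) - η t • g t i) :=
            Finset.sum_congr rfl fun i _ => hδrec t h1 h2 i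
      _ = (∑ i, ∑ l, P i l • δ t l) - η t • ∑ i, g t i := by
            rw [Finset.sum_sub_distrib, Finset.smul_sum]
      _ = (∑ l, (∑ i, P i l) • δ t l) - η t • ∑ i, g t i := by
            rw [Finset.sum_comm]; simp_rw [Finset.sum_smul]
      _ = (∑ l, δ t l) - η t • ∑ i, g t i := by simp_rw [hPcol, one_smul]
    simp only [hdbt, hsum, smul_sub]
    rw [smul_comm ((m:ℝ)⁻¹) (η t)]
  -- e recursion
  have herec : ∀ t, 1 ≤ t → t ≤ T → ∀ i,
      e (t+1) i = (∑ l, P i l • e t l) - η t • (g t i - (m:ℝ)⁻¹ • ∑ i', g t i') := by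
    intro t h1 h2 i
    have hPe : (∑ l, P i l • e t l) = (∑ l, P i l • δ t l) - db t := by
      simp only [het, smul_sub, Finset.sum_sub_distrib, hProwS]
    have hee : e (t+1) i = δ (t+1) i - db (t+1) := het (t+1) i
    rw [hee, hδrec t h1 h2 i, hdbrec t h1 h2, hPe, smul_sub]
    abel
  have hesum : ∀ t, ∑ i, e t i = 0 := by
    intro t
    simp only [het, Finset.sum_sub_distrib, Finset.sum_const, Finset.card_univ,
      Fintype.card_fin]
    rw [hdbt, ← Nat.cast_smul_eq_nsmul ℝ, smul_smul, mul_inv_cancel₀ hmne, one_smul,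
      sub_self]
  -- gradient bounds
  have hgbd : ∀ t i, ‖g t i‖ ≤ 2*L := by
    intro t i
    calc ‖g t i‖ ≤ ‖f' (S i (j t i)) (w t i)‖ + ‖f' (S' i (j t i)) (v t i)‖ := by
          rw [hgt]; exact norm_sub_le _ _
    _ ≤ L + L := add_le_add (hgradbd _ _) (hgradbd _ _)
    _ = 2*L := by ring
  have hgbd2 : ∀ t i, ‖g t i‖ ≤ β * ‖δ t i‖ + (if i = r ∧ j t i = k then 2*L else 0) := by
    intro t i
    by_cases h : i = r ∧ j t i = k
    · rw [if_pos h]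
      have h0 : 0 ≤ β * ‖δ t i‖ := by positivity
      linarith [hgbd t i]
    · rw [if_neg h]
      have hne : (i, j t i) ≠ (r, k) := by
        intro hc
        exact h ⟨congrArg Prod.fst hc, congrArg Prod.snd hc⟩
      have hz : S' i (j t i) = S i (j t i) := hSS' i (j t i) hne
      calc ‖g t i‖ = ‖f' (S i (j t i)) (w t i) - f' (S i (j t i)) (v t i)‖ := by
            rw [hgt, hz]
      _ ≤ β * ‖w t i - v t i‖ := hsmooth _ _ _
      _ = β * ‖δ t i‖ + 0 := by rw [hδt]; ring
  have hind : ∀ t, (∑ i, if i = r ∧ j t i = k then (2*L:ℝ) else 0)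
      = 2*L*(if j t r = k then (1:ℝ) else 0) := by
    intro t
    have hpt : ∀ i : Fin m, (if i = r ∧ j t i = k then (2*L:ℝ) else 0)
        = (if i = r then (if j t r = k then (2*L:ℝ) else 0) else 0) := by
      intro i
      by_cases hi : i = r
      · subst hi; by_cases hk : j t i = k <;> simp [hk]
      · simp [hi]
    rw [Finset.sum_congr rfl fun i _ => hpt i, Finset.sum_ite_eq' Finset.univ r]
    simp only [Finset.mem_univ, if_true]
    split <;> ring
  -- ℓ² triangle inequality
  have htri : ∀ a b : Fin m → H,
      Real.sqrt (∑ i, ‖a i - b i‖^2) ≤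
        Real.sqrt (∑ i, ‖a i‖^2) + Real.sqrt (∑ i, ‖b i‖^2) := by
    intro a b
    let a' : PiLp 2 (fun _ : Fin m => H) := WithLp.toLp 2 a
    let b' : PiLp 2 (fun _ : Fin m => H) := WithLp.toLp 2 b
    have h := norm_sub_le a' b'
    rw [PiLp.norm_eq_of_L2, PiLp.norm_eq_of_L2, PiLp.norm_eq_of_L2] at h
    exact h
  -- sum of norms vs db and Δ
  have hsumδ : ∀ t, (∑ i, ‖δ t i‖) ≤ m * ‖db t‖ + Real.sqrt m * Δ t := by
    intro t
    have h1 : ∀ i : Fin m, ‖δ t i‖ ≤ ‖db t‖ + ‖e t i‖ := by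
      intro i
      have hdec : δ t i = db t + e t i := by rw [het]; abel
      rw [hdec]; exact norm_add_le _ _
    have h2 : ∑ i, ‖e t i‖ ≤ Real.sqrt m * Δ t := by
      have hnn : 0 ≤ ∑ i, ‖e t i‖ := Finset.sum_nonneg fun i _ => norm_nonneg _
      have hcs : (∑ i, ‖e t i‖)^2 ≤ (m:ℝ) * ∑ i, ‖e t i‖^2 := by
        have := Finset.sum_mul_sq_le_sq_mul_sq Finset.univ (fun _ : Fin m => (1:ℝ))
          (fun i => ‖e t i‖)
        simpa [Finset.card_univ] using this
      calc ∑ i, ‖e t i‖ = Real.sqrt ((∑ i, ‖e t i‖)^2) := (Real.sqrt_sq hnn).symm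
      _ ≤ Real.sqrt ((m:ℝ) * ∑ i, ‖e t i‖^2) := Real.sqrt_le_sqrt hcs
      _ = Real.sqrt m * Δ t := by
            rw [hΔt, Real.sqrt_mul hm0.le]
    calc ∑ i, ‖δ t i‖ ≤ ∑ i : Fin m, (‖db t‖ + ‖e t i‖) :=
          Finset.sum_le_sum fun i _ => h1 i
    _ = m * ‖db t‖ + ∑ i, ‖e t i‖ := by
          rw [Finset.sum_add_distrib, Finset.sum_const, Finset.card_univ, Fintype.card_fin,
            nsmul_eq_mul]
    _ ≤ m * ‖db t‖ + Real.sqrt m * Δ t := by linarith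
  -- Δ recursion
  have hΔrec : ∀ t, 1 ≤ t → t ≤ T → Δ (t+1) ≤ lam * Δ t + η t * (4*L*Real.sqrt m) := by
    intro t h1 h2
    have hη := hηpos t h1 h2
    have hgb : ‖(m:ℝ)⁻¹ • ∑ i', g t i'‖ ≤ 2*L := by
      rw [norm_smul, Real.norm_eq_abs, abs_inv, abs_of_pos hm0]
      have hsumg : ‖∑ i', g t i'‖ ≤ (m:ℝ) * (2*L) := by
        calc ‖∑ i', g t i'‖ ≤ ∑ i', ‖g t i'‖ := norm_sum_le _ _
        _ ≤ ∑ _i' : Fin m, (2*L) := Finset.sum_le_sum fun i _ => hgbd t i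
        _ = (m:ℝ) * (2*L) := by
              rw [Finset.sum_const, Finset.card_univ, Fintype.card_fin, nsmul_eq_mul]
      calc (m:ℝ)⁻¹ * ‖∑ i', g t i'‖ ≤ (m:ℝ)⁻¹ * ((m:ℝ) * (2*L)) := by
            apply mul_le_mul_of_nonneg_left hsumg (by positivity)
      _ = 2*L := by field_simp
    have hg4 : ∀ i, ‖g t i - (m:ℝ)⁻¹ • ∑ i', g t i'‖ ≤ 4*L := by
      intro i
      calc ‖g t i - (m:ℝ)⁻¹ • ∑ i', g t i'‖
          ≤ ‖g t i‖ + ‖(m:ℝ)⁻¹ • ∑ i', g t i'‖ := norm_sub_le _ _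
      _ ≤ 2*L + 2*L := add_le_add (hgbd t i) hgb
      _ = 4*L := by ring
    have h2g : Real.sqrt (∑ i, ‖g t i - (m:ℝ)⁻¹ • ∑ i', g t i'‖^2) ≤ 4*L*Real.sqrt m := by
      calc Real.sqrt (∑ i, ‖g t i - (m:ℝ)⁻¹ • ∑ i', g t i'‖^2)
          ≤ Real.sqrt (∑ _i : Fin m, (4*L)^2) := by
            apply Real.sqrt_le_sqrt
            exact Finset.sum_le_sum fun i _ => pow_le_pow_left₀ (norm_nonneg _) (hg4 i) 2
      _ = Real.sqrt ((m:ℝ) * (4*L)^2) := by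
            rw [Finset.sum_const, Finset.card_univ, Fintype.card_fin, nsmul_eq_mul]
      _ = 4*L*Real.sqrt m := by
            rw [Real.sqrt_mul hm0.le, Real.sqrt_sq (by positivity)]; ring
    have hdecomp : Δ (t+1) ≤ Real.sqrt (∑ i, ‖∑ l, P i l • e t l‖^2)
        + Real.sqrt (∑ i, ‖η t • (g t i - (m:ℝ)⁻¹ • ∑ i', g t i')‖^2) := by
      have := htri (fun i => ∑ l, P i l • e t l)
        (fun i => η t • (g t i - (m:ℝ)⁻¹ • ∑ i', g t i'))
      have heq : ∀ i : Fin m, e (t+1) i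
          = (∑ l, P i l • e t l) - η t • (g t i - (m:ℝ)⁻¹ • ∑ i', g t i') :=
        herec t h1 h2
      rw [hΔt]
      simp_rw [heq]
      exact this
    have hspece : Real.sqrt (∑ i, ‖∑ l, P i l • e t l‖^2) ≤ lam * Δ t := by
      rw [hΔt]; exact hspec (e t) (hesum t)
    have hsmul : Real.sqrt (∑ i, ‖η t • (g t i - (m:ℝ)⁻¹ • ∑ i', g t i')‖^2)
        ≤ η t * (4*L*Real.sqrt m) := by
      have hrw : ∀ i : Fin m, ‖η t • (g t i - (m:ℝ)⁻¹ • ∑ i', g t i')‖^2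
          = η t ^2 * ‖g t i - (m:ℝ)⁻¹ • ∑ i', g t i'‖^2 := by
        intro i
        rw [norm_smul, Real.norm_eq_abs, mul_pow, sq_abs]
      calc Real.sqrt (∑ i, ‖η t • (g t i - (m:ℝ)⁻¹ • ∑ i', g t i')‖^2)
          = Real.sqrt (η t ^2 * ∑ i, ‖g t i - (m:ℝ)⁻¹ • ∑ i', g t i'‖^2) := by
            rw [Finset.mul_sum]
            exact congrArg Real.sqrt (Finset.sum_congr rfl fun i _ => hrw i)
      _ = η t * Real.sqrt (∑ i, ‖g t i - (m:ℝ)⁻¹ • ∑ i', g t i'‖^2) := by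
            rw [Real.sqrt_mul (sq_nonneg _), Real.sqrt_sq hη.le]
      _ ≤ η t * (4*L*Real.sqrt m) := mul_le_mul_of_nonneg_left h2g hη.le
    calc Δ (t+1) ≤ _ + _ := hdecomp
    _ ≤ lam * Δ t + η t * (4*L*Real.sqrt m) := add_le_add hspece hsmul
  -- Δ bound
  have hC1 : ∀ t, 1 ≤ t → t ≤ T + 1 → Δ t ≤ 4*L*Real.sqrt m * Sm t := by
    intro t
    induction t with
    | zero => intro h; omega
    | succ nn ih =>
      intro h1 h2
      rcases Nat.eq_zero_or_pos nn with hn | hn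
      · subst hn
        have he1 : ∀ i, e 1 i = 0 := by intro i; simp [het, hδ1, hdb1]
        have hΔ1 : Δ 1 = 0 := by rw [hΔt]; simp [he1]
        have hS1 : Sm 1 = 0 := by rw [hSmt]; simp
        rw [hΔ1, hS1, mul_zero]
      · have hn1 : 1 ≤ nn := hn
        have hnT : nn ≤ T := by omega
        have ihn := ih hn1 (by omega)
        have hrec := hΔrec nn hn1 hnT
        have hsum : Sm (nn+1) = lam * Sm nn + η nn := by
          have hne : nn - 1 + 1 = nn := by omega
          have e1 : Sm (nn+1) = ∑ q ∈ Finset.Icc 1 nn, η q * lam ^ (nn - q) := by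
            simp only [hSmt, Nat.add_sub_cancel]
            apply Finset.sum_congr rfl
            intro q hq
            have hq2 : nn + 1 - q - 1 = nn - q := by omega
            rw [hq2]
          have e2 : ∑ q ∈ Finset.Icc 1 nn, η q * lam ^ (nn - q)
              = (∑ q ∈ Finset.Icc 1 (nn-1), η q * lam ^ (nn - q)) + η nn := by
            conv_lhs => rw [← hne]
            rw [Finset.sum_Icc_succ_top (by omega), hne]
            simp
          have e3 : ∀ q ∈ Finset.Icc 1 (nn-1),
              η q * lam ^ (nn - q) = lam * (η q * lam ^ (nn - q - 1)) := by
            intro q hq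
            have hq1 := (Finset.mem_Icc.mp hq).1
            have hq' : q ≤ nn - 1 := (Finset.mem_Icc.mp hq).2
            have hexp : nn - q = (nn - q - 1) + 1 := by omega
            conv_lhs => rw [hexp]
            rw [pow_succ]
            ring
          rw [e1, e2, Finset.sum_congr rfl e3, ← Finset.mul_sum, ← hSmt nn]
        calc Δ (nn+1) ≤ lam * Δ nn + η nn * (4*L*Real.sqrt m) := hrec
        _ ≤ lam * (4*L*Real.sqrt m * Sm nn) + η nn * (4*L*Real.sqrt m) :=
              add_le_add_left (mul_le_mul_of_nonneg_left ihn hlam0) _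
        _ = 4*L*Real.sqrt m * (lam * Sm nn + η nn) := by ring
        _ = 4*L*Real.sqrt m * Sm (nn+1) := by rw [hsum]
  -- Sm nonneg
  have hSmnn : ∀ t, t ≤ T → 0 ≤ Sm t := by
    intro t ht
    rw [hSmt]
    apply Finset.sum_nonneg
    intro q hq
    have hq1 := (Finset.mem_Icc.mp hq).1
    have hq2 : q ≤ T := by have := (Finset.mem_Icc.mp hq).2; omega
    exact mul_nonneg (hη0 q hq1 hq2) (pow_nonneg hlam0 _)
  have hBnn : ∀ u, 1 ≤ u → u ≤ T → 0 ≤ B u := by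
    intro u h1 h2
    rw [hBt']
    have hηu := hη0 u h1 h2
    have h3 := hSmnn u h2
    have h4 : (0:ℝ) ≤ if j u r = k then (1:ℝ) else 0 := by split <;> norm_num
    have h5 : 0 ≤ η u / m * (if j u r = k then (1:ℝ) else 0) :=
      mul_nonneg (by positivity) h4
    have h6 : 0 ≤ 2 * β * η u * Sm u := by
      have := mul_nonneg (mul_nonneg (mul_nonneg (by norm_num : (0:ℝ) ≤ 2) hβ.le) hηu) h3
      linarith [this]
    linarith
  -- db recursion bound
  have hArec : ∀ t, 1 ≤ t → t ≤ T →
      ‖db (t+1)‖ ≤ (1 + β * η t) * ‖db t‖ + 2*L*B t := by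
    intro t h1 h2
    have hη := hηpos t h1 h2
    set χ := (if j t r = k then (1:ℝ) else 0) with hχ
    have hstep1 : ‖db (t+1)‖ ≤ ‖db t‖ + η t * ((m:ℝ)⁻¹ * ‖∑ i, g t i‖) := by
      rw [hdbrec t h1 h2]
      refine (norm_sub_le _ _).trans ?_
      rw [norm_smul, norm_smul, Real.norm_eq_abs, Real.norm_eq_abs, abs_of_pos hη,
        abs_inv, abs_of_pos hm0]
    have hsumg : ‖∑ i, g t i‖ ≤ β * (∑ i, ‖δ t i‖) + 2*L*χ := by
      calc ‖∑ i, g t i‖ ≤ ∑ i, ‖g t i‖ := norm_sum_le _ _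
      _ ≤ ∑ i, (β * ‖δ t i‖ + if i = r ∧ j t i = k then 2*L else 0) :=
            Finset.sum_le_sum fun i _ => hgbd2 t i
      _ = β * (∑ i, ‖δ t i‖) + (∑ i, if i = r ∧ j t i = k then (2*L:ℝ) else 0) := by
            rw [Finset.sum_add_distrib, Finset.mul_sum]
      _ = β * (∑ i, ‖δ t i‖) + 2*L*χ := by rw [hind t]
    have hχnn : 0 ≤ χ := by rw [hχ]; split <;> norm_num
    have key : ‖db (t+1)‖ ≤ ‖db t‖
        + η t * ((m:ℝ)⁻¹ * (β * ((m:ℝ) * ‖db t‖ + Real.sqrt m * Δ t) + 2*L*χ)) := by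
      refine hstep1.trans ?_
      gcongr
      refine hsumg.trans ?_
      gcongr
      exact hsumδ t
    have expand : ‖db t‖
        + η t * ((m:ℝ)⁻¹ * (β * ((m:ℝ) * ‖db t‖ + Real.sqrt m * Δ t) + 2*L*χ))
        = (1 + β*η t) * ‖db t‖ + β * η t * (Real.sqrt m * Δ t / m) + 2*L*(η t / m)*χ := by
      field_simp
      ring
    rw [expand] at key
    have hΔb := hC1 t h1 (by omega)
    have hfin : β * η t * (Real.sqrt m * Δ t / m) ≤ 2*L*(2*β*η t * Sm t) := by
      have h1' : Real.sqrt m * Δ t / m ≤ 4*L*Sm t := by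
        rw [div_le_iff₀ hm0]
        calc Real.sqrt m * Δ t ≤ Real.sqrt m * (4*L*Real.sqrt m * Sm t) :=
              mul_le_mul_of_nonneg_left hΔb hsmpos.le
        _ = 4*L*Sm t*(Real.sqrt m * Real.sqrt m) := by ring
        _ = 4*L*Sm t*(m:ℝ) := by rw [hsm]
      calc β*η t*(Real.sqrt m * Δ t / m) ≤ β*η t*(4*L*Sm t) :=
            mul_le_mul_of_nonneg_left h1' (by positivity)
      _ = 2*L*(2*β*η t*Sm t) := by ring
    have hBtt : 2*L*B t = 2*L*(2*β*η t*Sm t) + 2*L*(η t/m)*χ := by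
      rw [hBt', hχ]; ring
    linarith
  -- main induction
  have hC2 : ∀ t, 1 ≤ t → t ≤ T + 1 →
      ‖db t‖ ≤ 2*L * ∑ u ∈ Finset.Icc 1 (t-1), B u
        * ∏ s ∈ Finset.Icc (u+1) (t-1), (1 + β * η s) := by
    intro t
    induction t with
    | zero => intro h; omega
    | succ nn ih =>
      intro h1 h2
      rcases Nat.eq_zero_or_pos nn with hn | hn
      · subst hn
        simp [hdb1]
      · have hn1 : 1 ≤ nn := hn
        have hnT : nn ≤ T := by omega
        have ihn := ih hn1 (by omega)
        have hrec := hArec nn hn1 hnT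
        have hηn := hηpos nn hn1 hnT
        have h1βη : (0:ℝ) ≤ 1 + β * η nn := by positivity
        have hsum : ∑ u ∈ Finset.Icc 1 nn, B u * ∏ s ∈ Finset.Icc (u+1) nn, (1 + β * η s)
            = (1 + β * η nn) * (∑ u ∈ Finset.Icc 1 (nn-1), B u
                * ∏ s ∈ Finset.Icc (u+1) (nn-1), (1 + β * η s)) + B nn := by
          have hne : nn - 1 + 1 = nn := by omega
          have e2 : ∑ u ∈ Finset.Icc 1 nn, B u * ∏ s ∈ Finset.Icc (u+1) nn, (1 + β * η s)
              = (∑ u ∈ Finset.Icc 1 (nn-1), B u * ∏ s ∈ Finset.Icc (u+1) nn, (1 + β * η s))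
                + B nn * ∏ s ∈ Finset.Icc (nn+1) nn, (1 + β * η s) := by
            conv_lhs => rw [← hne]
            rw [Finset.sum_Icc_succ_top (by omega), hne]
          have e3 : ∀ u ∈ Finset.Icc 1 (nn-1),
              B u * ∏ s ∈ Finset.Icc (u+1) nn, (1 + β * η s)
              = (1 + β * η nn) * (B u * ∏ s ∈ Finset.Icc (u+1) (nn-1), (1 + β * η s)) := by
            intro u hu
            have hu' : u ≤ nn - 1 := (Finset.mem_Icc.mp hu).2
            conv_lhs => rw [← hne]
            rw [Finset.prod_Icc_succ_top (by omega), hne]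
            ring
          rw [e2, Finset.sum_congr rfl e3, ← Finset.mul_sum]
          congr 1
          rw [Finset.Icc_eq_empty (by omega), Finset.prod_empty, mul_one]
        calc ‖db (nn+1)‖ ≤ (1 + β * η nn) * ‖db nn‖ + 2*L*B nn := hrec
        _ ≤ (1 + β * η nn) * (2*L * ∑ u ∈ Finset.Icc 1 (nn-1), B u
              * ∏ s ∈ Finset.Icc (u+1) (nn-1), (1 + β * η s)) + 2*L*B nn :=
            add_le_add_left (mul_le_mul_of_nonneg_left ihn h1βη) _
        _ = 2*L * (∑ u ∈ Finset.Icc 1 nn, B u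
              * ∏ s ∈ Finset.Icc (u+1) nn, (1 + β * η s)) := by
            rw [hsum]; ring
        _ = 2*L * ∑ u ∈ Finset.Icc 1 ((nn+1)-1), B u
              * ∏ s ∈ Finset.Icc (u+1) ((nn+1)-1), (1 + β * η s) := by
            simp only [Nat.add_sub_cancel]
  -- conclusion
  have hfinal := hC2 (T+1) (by omega) (le_refl _)
  simp only [Nat.add_sub_cancel] at hfinal
  have heq : ((m : ℝ)⁻¹ • ∑ i, w (T + 1) i) - ((m : ℝ)⁻¹ • ∑ i, v (T + 1) i)
      = db (T+1) := by
    simp only [hdbdef, hδdef, Finset.sum_sub_distrib, smul_sub]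
  calc |f z ((m : ℝ)⁻¹ • ∑ i, w (T + 1) i) - f z ((m : ℝ)⁻¹ • ∑ i, v (T + 1) i)|
      ≤ L * ‖((m : ℝ)⁻¹ • ∑ i, w (T + 1) i) - ((m : ℝ)⁻¹ • ∑ i, v (T + 1) i)‖ :=
        hlip z _ _
  _ = L * ‖db (T+1)‖ := by rw [heq]
  _ ≤ L * (2*L * ∑ u ∈ Finset.Icc 1 T, B u
        * ∏ s ∈ Finset.Icc (u+1) T, (1 + β * η s)) :=
      mul_le_mul_of_nonneg_left hfinal hL.le
  _ = 2 * L ^ 2 * ∑ u ∈ Finset.Icc 1 T, B u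
        * ∏ s ∈ Finset.Icc (u+1) T, (1 + β * η s) := by ring
  _ = 2 * L ^ 2 * ∑ t ∈ Finset.Icc 1 T,
          (2 * β * η t * (∑ q ∈ Finset.Icc 1 (t - 1), η q * lam ^ (t - q - 1))
              + η t / m * (if j t r = k then (1 : ℝ) else 0)) *
            ∏ s ∈ Finset.Icc (t + 1) T, (1 + β * η s) := by
      simp only [hBt', hSmt]
end

section
/- Assume f is L-Lipschitz and β-smooth (no convexity is assumed), P is a gossip matrix with spectral bound λ ∈ [0, 1), and η_t = η > 0 for all t. Then for every z ∈ 𝒵, |f(w̄^{T+1}; z) − f(v̄^{T+1}; z)| ≤ (4L²η/(1−λ)) (1 + βη)^T + (2L²η/m) ∑_{t=1}^T (1 + βη)^{T−t} 𝟙[j_t(r)=k]. -/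
/-- non-convex case, constant stepsize `η > 0`. -/
theorem dsgd_stability_nonconvex_constant_step
    {H : Type*} [NormedAddCommGroup H] [InnerProductSpace ℝ H]
    {Z : Type*} (f : Z → H → ℝ) (f' : Z → H → H)
    (L β : ℝ) (hL : 0 < L) (hβ : 0 < β)
    (hdiff : ∀ (z : Z) (x : H), HasFDerivAt (f z) ((innerSL ℝ) (f' z x)) x)
    (hlip : ∀ (z : Z) (x y : H), |f z x - f z y| ≤ L * ‖x - y‖)
    (hgradbd : ∀ (z : Z) (x : H), ‖f' z x‖ ≤ L)
    (hsmooth : ∀ (z : Z) (x y : H), ‖f' z x - f' z y‖ ≤ β * ‖x - y‖)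
    (m n T : ℕ) (hm : 1 ≤ m) (hn : 1 ≤ n) (hT : 1 ≤ T)
    (P : Fin m → Fin m → ℝ)
    (hPsym : ∀ i l, P i l = P l i)
    (hPpos : ∀ i l, 0 ≤ P i l)
    (hProw : ∀ i, ∑ l, P i l = 1)
    (lam : ℝ) (hlam0 : 0 ≤ lam) (hlam1 : lam < 1)
    (hspec : ∀ vv : Fin m → H, ∑ i, vv i = 0 →
      Real.sqrt (∑ i, ‖∑ l, P i l • vv l‖ ^ 2) ≤ lam * Real.sqrt (∑ i, ‖vv i‖ ^ 2))
    (r : Fin m) (k : Fin n)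
    (S S' : Fin m → Fin n → Z)
    (hSS' : ∀ (r' : Fin m) (k' : Fin n), (r', k') ≠ (r, k) → S' r' k' = S r' k')
    (j : ℕ → Fin m → Fin n)
    (η : ℝ) (hη0 : 0 < η)
    (w₀ : H) (w v : ℕ → Fin m → H)
    (hw1 : ∀ i, w 1 i = w₀) (hv1 : ∀ i, v 1 i = w₀)
    (hwrec : ∀ t, 1 ≤ t → t ≤ T → ∀ i,
      w (t + 1) i = ∑ l, P i l • w t l - η • f' (S i (j t i)) (w t i))
    (hvrec : ∀ t, 1 ≤ t → t ≤ T → ∀ i,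
      v (t + 1) i = ∑ l, P i l • v t l - η • f' (S' i (j t i)) (v t i))
    :
    ∀ z : Z,
      |f z ((m : ℝ)⁻¹ • ∑ i, w (T + 1) i) - f z ((m : ℝ)⁻¹ • ∑ i, v (T + 1) i)| ≤
        4 * L ^ 2 * η / (1 - lam) * (1 + β * η) ^ T
          + 2 * L ^ 2 * η / m * ∑ t ∈ Finset.Icc 1 T, (1 + β * η) ^ (T - t) * (if j t r = k then (1 : ℝ) else 0) := by
  intro z
  set c : ℝ := 1 + β * η with hc
  have hc0 : (0:ℝ) ≤ c := by positivity
  have hm0 : (0:ℝ) < m := by exact_mod_cast Nat.lt_of_lt_of_le Nat.zero_lt_one hm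
  set χ : ℕ → ℝ := fun t => if j t r = k then (1:ℝ) else 0 with hχ
  have hχ0 : ∀ t, 0 ≤ χ t := by intro t; simp only [hχ]; split <;> norm_num
  -- one-step recursion on the summed differences
  have step : ∀ t, 1 ≤ t → t ≤ T →
      ∑ i, ‖w (t+1) i - v (t+1) i‖ ≤
        c * ∑ i, ‖w t i - v t i‖ + 2*L*η * χ t := by
    intro t ht1 ht2
    have key : ∀ i : Fin m, ‖w (t+1) i - v (t+1) i‖ ≤
        (∑ l, P i l * ‖w t l - v t l‖) +
          η * ‖f' (S i (j t i)) (w t i) - f' (S' i (j t i)) (v t i)‖ := by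
      intro i
      rw [hwrec t ht1 ht2 i, hvrec t ht1 ht2 i]
      have he : (∑ l, P i l • w t l - η • f' (S i (j t i)) (w t i))
            - (∑ l, P i l • v t l - η • f' (S' i (j t i)) (v t i))
          = (∑ l, P i l • (w t l - v t l))
            - η • (f' (S i (j t i)) (w t i) - f' (S' i (j t i)) (v t i)) := by
        simp only [smul_sub, Finset.sum_sub_distrib]
        abel
      rw [he]
      refine (norm_sub_le _ _).trans ?_
      gcongr
      · refine (norm_sum_le _ _).trans ?_
        refine Finset.sum_le_sum fun l _ => ?_
        rw [norm_smul, Real.norm_eq_abs, abs_of_nonneg (hPpos i l)]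
      · rw [norm_smul, Real.norm_eq_abs, abs_of_nonneg hη0.le]
    have hA : ∑ i, ∑ l, P i l * ‖w t l - v t l‖ = ∑ l, ‖w t l - v t l‖ := by
      rw [Finset.sum_comm]
      refine Finset.sum_congr rfl fun l _ => ?_
      rw [← Finset.sum_mul]
      have : ∑ i, P i l = 1 := by
        rw [show (∑ i, P i l) = ∑ i, P l i from Finset.sum_congr rfl fun i _ => hPsym i l,
          hProw l]
      rw [this, one_mul]
    have hB : ∀ i : Fin m, η * ‖f' (S i (j t i)) (w t i) - f' (S' i (j t i)) (v t i)‖ ≤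
        η * β * ‖w t i - v t i‖ + (if i = r ∧ j t r = k then 2*L*η else 0) := by
      intro i
      by_cases hir : i = r ∧ j t r = k
      · rw [if_pos hir]
        have h1 : ‖f' (S i (j t i)) (w t i) - f' (S' i (j t i)) (v t i)‖ ≤ 2 * L := by
          refine (norm_sub_le _ _).trans ?_
          have ha := hgradbd (S i (j t i)) (w t i)
          have hb := hgradbd (S' i (j t i)) (v t i)
          linarith
        have h2 := mul_le_mul_of_nonneg_left h1 hη0.le
        have h3 : 0 ≤ η*β*‖w t i - v t i‖ := by positivity
        linarith
      · have hsame : S' i (j t i) = S i (j t i) := by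
          refine hSS' i (j t i) ?_
          intro hcontra
          apply hir
          have h1 : i = r := (Prod.mk.injEq _ _ _ _ ▸ hcontra).1
          have h2 : j t i = k := (Prod.mk.injEq _ _ _ _ ▸ hcontra).2
          exact ⟨h1, by rw [← h1]; exact h2⟩
        rw [hsame, if_neg hir]
        have h2 := mul_le_mul_of_nonneg_left (hsmooth (S i (j t i)) (w t i) (v t i)) hη0.le
        linarith
    calc ∑ i, ‖w (t+1) i - v (t+1) i‖
        ≤ ∑ i, ((∑ l, P i l * ‖w t l - v t l‖) +
            η * ‖f' (S i (j t i)) (w t i) - f' (S' i (j t i)) (v t i)‖) :=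
          Finset.sum_le_sum fun i _ => key i
      _ = (∑ l, ‖w t l - v t l‖)
            + ∑ i, η * ‖f' (S i (j t i)) (w t i) - f' (S' i (j t i)) (v t i)‖ := by
          rw [Finset.sum_add_distrib, hA]
      _ ≤ (∑ l, ‖w t l - v t l‖)
            + ∑ i, (η * β * ‖w t i - v t i‖ + (if i = r ∧ j t r = k then 2*L*η else 0)) :=
          add_le_add le_rfl (Finset.sum_le_sum fun i _ => hB i)
      _ = c * (∑ i, ‖w t i - v t i‖) + 2*L*η * χ t := by
          rw [Finset.sum_add_distrib]
          have h1 : ∑ i : Fin m, (if i = r ∧ j t r = k then 2*L*η else 0) = 2*L*η * χ t := by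
            by_cases hjk : j t r = k
            · simp [hχ, hjk, Finset.sum_ite_eq']
            · simp [hχ, hjk]
          rw [h1, hc, ← Finset.mul_sum]
          ring
  -- main induction
  have main : ∀ t, t ≤ T →
      ∑ i, ‖w (t+1) i - v (t+1) i‖ ≤
        2*L*η * ∑ s ∈ Finset.Icc 1 t, c ^ (t - s) * χ s := by
    intro t
    induction t with
    | zero =>
      intro _
      simp only [Nat.zero_add]
      have : ∀ i : Fin m, w 1 i - v 1 i = 0 := by
        intro i; rw [hw1 i, hv1 i, sub_self]
      simp [this]
    | succ t ih =>
      intro ht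
      have ht' : t ≤ T := Nat.le_of_succ_le ht
      have h1 := step (t+1) (Nat.succ_le_succ (Nat.zero_le t)) ht
      have h2 := ih ht'
      have hsum : ∑ s ∈ Finset.Icc 1 (t+1), c ^ (t+1 - s) * χ s
          = (∑ s ∈ Finset.Icc 1 t, c ^ (t+1 - s) * χ s) + c ^ (t+1-(t+1)) * χ (t+1) := by
        rw [Finset.sum_Icc_succ_top (Nat.succ_le_succ (Nat.zero_le t))]
      have hpow : ∀ s ∈ Finset.Icc 1 t, c ^ (t+1 - s) * χ s = c * (c ^ (t - s) * χ s) := by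
        intro s hs
        have hst : s ≤ t := (Finset.mem_Icc.mp hs).2
        have : t + 1 - s = (t - s) + 1 := by omega
        rw [this, pow_succ]
        ring
      rw [hsum, Finset.sum_congr rfl hpow, ← Finset.mul_sum, Nat.sub_self, pow_zero, one_mul]
      calc ∑ i, ‖w (t+1+1) i - v (t+1+1) i‖
          ≤ c * ∑ i, ‖w (t+1) i - v (t+1) i‖ + 2*L*η * χ (t+1) := h1
        _ ≤ c * (2*L*η * ∑ s ∈ Finset.Icc 1 t, c ^ (t - s) * χ s) + 2*L*η * χ (t+1) := by
            gcongr
        _ = 2*L*η * (c * (∑ s ∈ Finset.Icc 1 t, c ^ (t - s) * χ s) + χ (t+1)) := by ring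
  have hmainT := main T (le_refl T)
  -- final assembly
  have hterm1 : 0 ≤ 4 * L ^ 2 * η / (1 - lam) * (1 + β * η) ^ T := by
    have : (0:ℝ) < 1 - lam := by linarith
    positivity
  have hnorm : ‖((m : ℝ)⁻¹ • ∑ i, w (T + 1) i) - ((m : ℝ)⁻¹ • ∑ i, v (T + 1) i)‖
      ≤ (m:ℝ)⁻¹ * ∑ i, ‖w (T+1) i - v (T+1) i‖ := by
    rw [← smul_sub, ← Finset.sum_sub_distrib, norm_smul, Real.norm_eq_abs,
      abs_of_nonneg (by positivity : (0:ℝ) ≤ (m:ℝ)⁻¹)]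
    gcongr
    exact norm_sum_le _ _
  calc |f z ((m : ℝ)⁻¹ • ∑ i, w (T + 1) i) - f z ((m : ℝ)⁻¹ • ∑ i, v (T + 1) i)|
      ≤ L * ‖((m : ℝ)⁻¹ • ∑ i, w (T + 1) i) - ((m : ℝ)⁻¹ • ∑ i, v (T + 1) i)‖ := hlip z _ _
    _ ≤ L * ((m:ℝ)⁻¹ * ∑ i, ‖w (T+1) i - v (T+1) i‖) := by gcongr
    _ ≤ L * ((m:ℝ)⁻¹ * (2*L*η * ∑ s ∈ Finset.Icc 1 T, c ^ (T - s) * χ s)) := by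
        gcongr
    _ = 2 * L ^ 2 * η / m * ∑ t ∈ Finset.Icc 1 T, (1 + β * η) ^ (T - t) * (if j t r = k then (1:ℝ) else 0) := by
        simp only [hc, hχ]
        field_simp
    _ ≤ 4 * L ^ 2 * η / (1 - lam) * (1 + β * η) ^ T
          + 2 * L ^ 2 * η / m * ∑ t ∈ Finset.Icc 1 T, (1 + β * η) ^ (T - t) * (if j t r = k then (1:ℝ) else 0) := by
        linarith
end

section
/- Assume f is L-Lipschitz and β-smooth (no convexity is assumed), P is a gossip matrix with spectral bound λ ∈ [0, 1), and η_t = η > 0 for all t. Let w̄_avg = (1/(T+1)) ∑_{t=1}^{T+1} w̄^t and v̄_avg = (1/(T+1)) ∑_{t=1}^{T+1} v̄^t. Then for every z ∈ 𝒵, |f(w̄_avg; z) − f(v̄_avg; z)| ≤ 4L² (1 + βη)^{T+1} / ((1−λ) β (T+1)) + (2ηL²/(m(T+1))) ∑_{t=1}^{T+1} ∑_{s=1}^{t−1} (1 + βη)^{t−1−s} 𝟙[j_s(r)=k]. -/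
/-- non-convex case, constant stepsize, averaged iterates. -/
theorem dsgd_stability_nonconvex_averaged
    {H : Type*} [NormedAddCommGroup H] [InnerProductSpace ℝ H]
    {Z : Type*} (f : Z → H → ℝ) (f' : Z → H → H)
    (L β : ℝ) (hL : 0 < L) (hβ : 0 < β)
    (hdiff : ∀ (z : Z) (x : H), HasFDerivAt (f z) ((innerSL ℝ) (f' z x)) x)
    (hlip : ∀ (z : Z) (x y : H), |f z x - f z y| ≤ L * ‖x - y‖)
    (hgradbd : ∀ (z : Z) (x : H), ‖f' z x‖ ≤ L)
    (hsmooth : ∀ (z : Z) (x y : H), ‖f' z x - f' z y‖ ≤ β * ‖x - y‖)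
    (m n T : ℕ) (hm : 1 ≤ m) (hn : 1 ≤ n) (hT : 1 ≤ T)
    (P : Fin m → Fin m → ℝ)
    (hPsym : ∀ i l, P i l = P l i)
    (hPpos : ∀ i l, 0 ≤ P i l)
    (hProw : ∀ i, ∑ l, P i l = 1)
    (lam : ℝ) (hlam0 : 0 ≤ lam) (hlam1 : lam < 1)
    (hspec : ∀ vv : Fin m → H, ∑ i, vv i = 0 →
      Real.sqrt (∑ i, ‖∑ l, P i l • vv l‖ ^ 2) ≤ lam * Real.sqrt (∑ i, ‖vv i‖ ^ 2))
    (r : Fin m) (k : Fin n)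
    (S S' : Fin m → Fin n → Z)
    (hSS' : ∀ (r' : Fin m) (k' : Fin n), (r', k') ≠ (r, k) → S' r' k' = S r' k')
    (j : ℕ → Fin m → Fin n)
    (η : ℝ) (hη0 : 0 < η)
    (w₀ : H) (w v : ℕ → Fin m → H)
    (hw1 : ∀ i, w 1 i = w₀) (hv1 : ∀ i, v 1 i = w₀)
    (hwrec : ∀ t, 1 ≤ t → t ≤ T → ∀ i,
      w (t + 1) i = ∑ l, P i l • w t l - η • f' (S i (j t i)) (w t i))
    (hvrec : ∀ t, 1 ≤ t → t ≤ T → ∀ i,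
      v (t + 1) i = ∑ l, P i l • v t l - η • f' (S' i (j t i)) (v t i))
    :
    ∀ z : Z,
      |f z (((T : ℝ) + 1)⁻¹ • ∑ t ∈ Finset.Icc 1 (T + 1), (m : ℝ)⁻¹ • ∑ i, w t i) -
          f z (((T : ℝ) + 1)⁻¹ • ∑ t ∈ Finset.Icc 1 (T + 1), (m : ℝ)⁻¹ • ∑ i, v t i)| ≤
        4 * L ^ 2 * (1 + β * η) ^ (T + 1) / ((1 - lam) * β * ((T : ℝ) + 1))
          + 2 * η * L ^ 2 / (m * ((T : ℝ) + 1)) *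
            ∑ t ∈ Finset.Icc 1 (T + 1), ∑ s ∈ Finset.Icc 1 (t - 1),
              (1 + β * η) ^ (t - 1 - s) * (if j s r = k then (1 : ℝ) else 0) := by
  intro z
  have hm0 : (0:ℝ) < (m:ℝ) := by exact_mod_cast Nat.lt_of_lt_of_le Nat.zero_lt_one hm
  have hT0 : (0:ℝ) < (T:ℝ) + 1 := by positivity
  set d : ℕ → ℝ := fun t => ∑ i, ‖w t i - v t i‖ with hd
  set ind : ℕ → ℝ := fun t => if j t r = k then (1:ℝ) else 0 with hind
  have hdnn : ∀ t, 0 ≤ d t := fun t => Finset.sum_nonneg fun i _ => norm_nonneg _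
  have hindnn : ∀ t, 0 ≤ ind t := fun t => by
    by_cases h : j t r = k <;> simp [hind, h]
  have hd1 : d 1 = 0 := by simp [hd, hw1, hv1]
  -- one-step recursion on the summed distances
  have hstep : ∀ t, 1 ≤ t → t ≤ T →
      d (t+1) ≤ (1 + β*η) * d t + 2*η*L * ind t := by
    intro t ht1 htT
    have hdiff : ∀ i, w (t+1) i - v (t+1) i
        = (∑ l, P i l • (w t l - v t l))
          - η • (f' (S i (j t i)) (w t i) - f' (S' i (j t i)) (v t i)) := by
      intro i
      rw [hwrec t ht1 htT i, hvrec t ht1 htT i]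
      simp only [smul_sub, Finset.sum_sub_distrib]
      abel
    have hg : ∀ i, ‖f' (S i (j t i)) (w t i) - f' (S' i (j t i)) (v t i)‖
        ≤ β * ‖w t i - v t i‖ + (if i = r then (if j t i = k then 2*L else 0) else 0) := by
      intro i
      by_cases hir : i = r
      · subst hir
        by_cases hjk : j t i = k
        · have h1 := hgradbd (S i (j t i)) (w t i)
          have h2 := hgradbd (S' i (j t i)) (v t i)
          have h3 : ‖f' (S i (j t i)) (w t i) - f' (S' i (j t i)) (v t i)‖ ≤ 2*L := by
            calc ‖f' (S i (j t i)) (w t i) - f' (S' i (j t i)) (v t i)‖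
                ≤ ‖f' (S i (j t i)) (w t i)‖ + ‖f' (S' i (j t i)) (v t i)‖ := norm_sub_le _ _
              _ ≤ 2*L := by linarith
          have hb : 0 ≤ β * ‖w t i - v t i‖ := by positivity
          rw [if_pos rfl, if_pos hjk]
          linarith
        · have hS : S' i (j t i) = S i (j t i) :=
            hSS' i (j t i) (fun h => hjk (congrArg Prod.snd h))
          rw [hS, if_pos rfl, if_neg hjk, add_zero]
          exact hsmooth _ _ _
      · have hS : S' i (j t i) = S i (j t i) :=
          hSS' i (j t i) (fun h => hir (congrArg Prod.fst h))
        rw [hS]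
        simp only [if_neg hir, add_zero]
        exact hsmooth _ _ _
    have hni : ∀ i, ‖w (t+1) i - v (t+1) i‖
        ≤ (∑ l, P i l * ‖w t l - v t l‖)
          + η * (β * ‖w t i - v t i‖ + (if i = r then (if j t i = k then 2*L else 0) else 0)) := by
      intro i
      rw [hdiff i]
      calc ‖(∑ l, P i l • (w t l - v t l))
            - η • (f' (S i (j t i)) (w t i) - f' (S' i (j t i)) (v t i))‖
          ≤ ‖∑ l, P i l • (w t l - v t l)‖
            + ‖η • (f' (S i (j t i)) (w t i) - f' (S' i (j t i)) (v t i))‖ := norm_sub_le _ _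
        _ ≤ (∑ l, P i l * ‖w t l - v t l‖)
            + η * (β * ‖w t i - v t i‖ + (if i = r then (if j t i = k then 2*L else 0) else 0)) := by
          gcongr ?_ + ?_
          · calc ‖∑ l, P i l • (w t l - v t l)‖ ≤ ∑ l, ‖P i l • (w t l - v t l)‖ :=
                norm_sum_le _ _
              _ = ∑ l, P i l * ‖w t l - v t l‖ := by
                refine Finset.sum_congr rfl fun l _ => ?_
                rw [norm_smul, Real.norm_eq_abs, abs_of_nonneg (hPpos i l)]
          · rw [norm_smul, Real.norm_eq_abs, abs_of_nonneg hη0.le]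
            exact mul_le_mul_of_nonneg_left (hg i) hη0.le
    have hsum1 : (∑ i, ∑ l, P i l * ‖w t l - v t l‖) = d t := by
      rw [Finset.sum_comm]
      simp only [hd]
      refine Finset.sum_congr rfl fun l _ => ?_
      rw [← Finset.sum_mul, Finset.sum_congr rfl fun i _ => hPsym i l, hProw l, one_mul]
    have hsum2 : (∑ i : Fin m, (if i = r then (if j t i = k then 2*L else 0) else 0))
        = 2*L * ind t := by
      rw [Finset.sum_ite_eq' Finset.univ r (fun i => if j t i = k then 2*L else 0)]
      simp only [Finset.mem_univ, if_true, hind]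
      by_cases h : j t r = k <;> simp [h]
    calc d (t+1) ≤ ∑ i, ((∑ l, P i l * ‖w t l - v t l‖)
          + η * (β * ‖w t i - v t i‖ + (if i = r then (if j t i = k then 2*L else 0) else 0))) :=
        Finset.sum_le_sum fun i _ => hni i
      _ = (∑ i, ∑ l, P i l * ‖w t l - v t l‖)
          + (η * β * d t + η * ∑ i : Fin m, (if i = r then (if j t i = k then 2*L else 0) else 0)) := by
        rw [Finset.sum_add_distrib]
        congr 1
        simp only [hd]
        calc (∑ i, η * (β * ‖w t i - v t i‖ + (if i = r then (if j t i = k then 2*L else 0) else 0)))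
            = ∑ i, (η * β * ‖w t i - v t i‖
                + η * (if i = r then (if j t i = k then 2*L else 0) else 0)) :=
              Finset.sum_congr rfl fun i _ => by ring
          _ = η * β * (∑ i, ‖w t i - v t i‖)
                + η * ∑ i : Fin m, (if i = r then (if j t i = k then 2*L else 0) else 0) := by
              rw [Finset.sum_add_distrib, ← Finset.mul_sum, ← Finset.mul_sum]
      _ = (1 + β*η) * d t + 2*η*L * ind t := by
        rw [hsum1, hsum2]; ring
  -- closed form bound by induction
  have hmain : ∀ t, 1 ≤ t → t ≤ T + 1 →
      d t ≤ 2*η*L * ∑ s ∈ Finset.Icc 1 (t-1), (1 + β*η)^(t-1-s) * ind s := by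
    intro t
    induction t with
    | zero => intro h; omega
    | succ t ih =>
      intro _ htT1
      rcases Nat.eq_zero_or_pos t with h0 | hpos
      · subst h0
        simp [hd1]
      · have ht1 : 1 ≤ t := hpos
        have htT : t ≤ T := by omega
        have h1 := hstep t ht1 htT
        have h2 := ih ht1 (by omega)
        have hB : (∑ s ∈ Finset.Icc 1 (t+1-1), (1 + β*η)^(t+1-1-s) * ind s)
            = (1 + β*η) * (∑ s ∈ Finset.Icc 1 (t-1), (1 + β*η)^(t-1-s) * ind s) + ind t := by
          simp only [Nat.add_sub_cancel]
          obtain ⟨t', rfl⟩ : ∃ t', t = t' + 1 := ⟨t-1, by omega⟩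
          rw [Finset.sum_Icc_succ_top (by omega : 1 ≤ t' + 1)]
          simp only [Nat.add_sub_cancel, Nat.sub_self, pow_zero, one_mul]
          congr 1
          rw [Finset.mul_sum]
          refine Finset.sum_congr rfl fun s hs => ?_
          have hs' : s ≤ t' := (Finset.mem_Icc.mp hs).2
          have hts : t' + 1 - s = (t' - s) + 1 := by omega
          rw [hts, pow_succ]
          ring
        rw [hB]
        have hpos1 : (0:ℝ) ≤ 1 + β*η := by positivity
        have h3 : (1 + β*η) * d t
            ≤ (1 + β*η) * (2*η*L * ∑ s ∈ Finset.Icc 1 (t-1), (1 + β*η)^(t-1-s) * ind s) :=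
          mul_le_mul_of_nonneg_left h2 hpos1
        have h4 : (0:ℝ) < 2*η*L := by positivity
        nlinarith [hindnn t]
  -- norm bound on the averaged iterates
  have hnorm : ‖(((T : ℝ) + 1)⁻¹ • ∑ t ∈ Finset.Icc 1 (T + 1), (m : ℝ)⁻¹ • ∑ i, w t i)
      - (((T : ℝ) + 1)⁻¹ • ∑ t ∈ Finset.Icc 1 (T + 1), (m : ℝ)⁻¹ • ∑ i, v t i)‖
      ≤ ((T:ℝ)+1)⁻¹ * ∑ t ∈ Finset.Icc 1 (T + 1), (m:ℝ)⁻¹ * d t := by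
    rw [← smul_sub, ← Finset.sum_sub_distrib]
    rw [norm_smul, Real.norm_eq_abs, abs_of_nonneg (by positivity : (0:ℝ) ≤ ((T:ℝ)+1)⁻¹)]
    refine mul_le_mul_of_nonneg_left ?_ (by positivity)
    calc ‖∑ t ∈ Finset.Icc 1 (T + 1), ((m : ℝ)⁻¹ • ∑ i, w t i - (m : ℝ)⁻¹ • ∑ i, v t i)‖
        ≤ ∑ t ∈ Finset.Icc 1 (T + 1), ‖(m : ℝ)⁻¹ • ∑ i, w t i - (m : ℝ)⁻¹ • ∑ i, v t i‖ :=
        norm_sum_le _ _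
      _ ≤ ∑ t ∈ Finset.Icc 1 (T + 1), (m:ℝ)⁻¹ * d t := by
        refine Finset.sum_le_sum fun t _ => ?_
        rw [← smul_sub, ← Finset.sum_sub_distrib, norm_smul, Real.norm_eq_abs,
          abs_of_nonneg (by positivity : (0:ℝ) ≤ (m:ℝ)⁻¹)]
        exact mul_le_mul_of_nonneg_left (norm_sum_le _ _) (by positivity)
  have hfirst : (0:ℝ) ≤ 4 * L ^ 2 * (1 + β * η) ^ (T + 1) / ((1 - lam) * β * ((T : ℝ) + 1)) := by
    have h1 : (0:ℝ) < 1 - lam := by linarith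
    positivity
  calc |f z (((T : ℝ) + 1)⁻¹ • ∑ t ∈ Finset.Icc 1 (T + 1), (m : ℝ)⁻¹ • ∑ i, w t i) -
          f z (((T : ℝ) + 1)⁻¹ • ∑ t ∈ Finset.Icc 1 (T + 1), (m : ℝ)⁻¹ • ∑ i, v t i)|
      ≤ L * ‖(((T : ℝ) + 1)⁻¹ • ∑ t ∈ Finset.Icc 1 (T + 1), (m : ℝ)⁻¹ • ∑ i, w t i)
          - (((T : ℝ) + 1)⁻¹ • ∑ t ∈ Finset.Icc 1 (T + 1), (m : ℝ)⁻¹ • ∑ i, v t i)‖ := hlip z _ _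
    _ ≤ L * (((T:ℝ)+1)⁻¹ * ∑ t ∈ Finset.Icc 1 (T + 1), (m:ℝ)⁻¹ * d t) :=
        mul_le_mul_of_nonneg_left hnorm hL.le
    _ ≤ L * (((T:ℝ)+1)⁻¹ * ∑ t ∈ Finset.Icc 1 (T + 1),
          (m:ℝ)⁻¹ * (2*η*L * ∑ s ∈ Finset.Icc 1 (t-1), (1 + β*η)^(t-1-s) * ind s)) := by
        refine mul_le_mul_of_nonneg_left (mul_le_mul_of_nonneg_left
          (Finset.sum_le_sum fun t ht => ?_) (by positivity)) hL.le
        have hmem := Finset.mem_Icc.mp ht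
        exact mul_le_mul_of_nonneg_left (hmain t hmem.1 hmem.2) (by positivity)
    _ = 2 * η * L ^ 2 / (m * ((T : ℝ) + 1)) *
          ∑ t ∈ Finset.Icc 1 (T + 1), ∑ s ∈ Finset.Icc 1 (t - 1),
            (1 + β * η) ^ (t - 1 - s) * (if j s r = k then (1 : ℝ) else 0) := by
        rw [Finset.mul_sum, Finset.mul_sum, Finset.mul_sum]
        refine Finset.sum_congr rfl fun t _ => ?_
        simp only [hind]
        field_simp
    _ ≤ 4 * L ^ 2 * (1 + β * η) ^ (T + 1) / ((1 - lam) * β * ((T : ℝ) + 1))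
          + 2 * η * L ^ 2 / (m * ((T : ℝ) + 1)) *
            ∑ t ∈ Finset.Icc 1 (T + 1), ∑ s ∈ Finset.Icc 1 (t - 1),
              (1 + β * η) ^ (t - 1 - s) * (if j s r = k then (1 : ℝ) else 0) :=
        le_add_of_nonneg_left hfirst
end

section
/- Assume f is L-Lipschitz and β-smooth (no convexity is assumed). For each s let P̂^s = P^s + η_s β I_m, where I_m is the m × m identity matrix. Then the r-th local model of time-varying D-SGD satisfies, for every z ∈ 𝒵, |f(w^{T+1}(r); z) − f(v^{T+1}(r); z)| ≤ 2L² ∑_{t=1}^T (P̂^T P̂^{T−1} ⋯ P̂^{t+1})_{rr} η_t 𝟙[j_t(r)=k], where the empty matrix product (t = T) is the identity matrix. -/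
noncomputable def backProd {m : ℕ} (P : ℕ → Matrix (Fin m) (Fin m) ℝ) (T t : ℕ) :
    Matrix (Fin m) (Fin m) ℝ :=
  (((List.range' (t + 1) (T - t)).reverse.map P).prod)

lemma backProd_self {m : ℕ} (P : ℕ → Matrix (Fin m) (Fin m) ℝ) (t : ℕ) :
    backProd P t t = 1 := by
  simp [backProd]

lemma backProd_succ {m : ℕ} (P : ℕ → Matrix (Fin m) (Fin m) ℝ) {t s : ℕ} (h : s ≤ t) :
    backProd P (t + 1) s = P (t + 1) * backProd P t s := by
  have h1 : t + 1 - s = (t - s) + 1 := by omega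
  rw [backProd, backProd, h1, List.range'_concat]
  have h3 : s + 1 + 1 * (t - s) = t + 1 := by omega
  rw [h3]
  simp [List.reverse_append]

/-- local model, non-convex case, time-varying gossip matrices. -/
theorem dsgd_local_stability_nonconvex
    {H : Type*} [NormedAddCommGroup H] [InnerProductSpace ℝ H]
    {Z : Type*} (f : Z → H → ℝ) (f' : Z → H → H)
    (L β : ℝ) (hL : 0 < L) (hβ : 0 < β)
    (hdiff : ∀ (z : Z) (x : H), HasFDerivAt (f z) ((innerSL ℝ) (f' z x)) x)
    (hlip : ∀ (z : Z) (x y : H), |f z x - f z y| ≤ L * ‖x - y‖)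
    (hgradbd : ∀ (z : Z) (x : H), ‖f' z x‖ ≤ L)
    (hsmooth : ∀ (z : Z) (x y : H), ‖f' z x - f' z y‖ ≤ β * ‖x - y‖)
    (m n T : ℕ) (hm : 1 ≤ m) (hn : 1 ≤ n) (hT : 1 ≤ T)
    (P : ℕ → Matrix (Fin m) (Fin m) ℝ)
    (hPsym : ∀ t, 1 ≤ t → t ≤ T → ∀ i l, P t i l = P t l i)
    (hPpos : ∀ t, 1 ≤ t → t ≤ T → ∀ i l, 0 ≤ P t i l)
    (hProw : ∀ t, 1 ≤ t → t ≤ T → ∀ i, ∑ l, P t i l = 1)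
    (r : Fin m) (k : Fin n)
    (S S' : Fin m → Fin n → Z)
    (hSS' : ∀ (r' : Fin m) (k' : Fin n), (r', k') ≠ (r, k) → S' r' k' = S r' k')
    (j : ℕ → Fin m → Fin n)
    (η : ℕ → ℝ) (hηpos : ∀ t, 1 ≤ t → t ≤ T → 0 < η t)
    (w₀ : H) (w v : ℕ → Fin m → H)
    (hw1 : ∀ i, w 1 i = w₀) (hv1 : ∀ i, v 1 i = w₀)
    (hwrec : ∀ t, 1 ≤ t → t ≤ T → ∀ i,
      w (t + 1) i = ∑ l, P t i l • w t l - η t • f' (S i (j t i)) (w t i))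
    (hvrec : ∀ t, 1 ≤ t → t ≤ T → ∀ i,
      v (t + 1) i = ∑ l, P t i l • v t l - η t • f' (S' i (j t i)) (v t i))
    :
    ∀ z : Z,
      |f z (w (T + 1) r) - f z (v (T + 1) r)| ≤
        2 * L ^ 2 * ∑ t ∈ Finset.Icc 1 T, (backProd (fun s => P s + (η s * β) • (1 : Matrix (Fin m) (Fin m) ℝ)) T t) r r * η t * (if j t r = k then (1 : ℝ) else 0) := by
  intro z
  set Q : ℕ → Matrix (Fin m) (Fin m) ℝ :=
    fun s => P s + (η s * β) • (1 : Matrix (Fin m) (Fin m) ℝ) with hQ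
  have hQnn : ∀ t, 1 ≤ t → t ≤ T → ∀ i l, 0 ≤ Q t i l := by
    intro t h1 h2 i l
    have hp := hPpos t h1 h2 i l
    have hη := hηpos t h1 h2
    simp only [hQ, Matrix.add_apply, Matrix.smul_apply, Matrix.one_apply, smul_eq_mul]
    split
    · nlinarith
    · nlinarith
  have key : ∀ u, u ≤ T → ∀ i, ‖w (u+1) i - v (u+1) i‖ ≤
      2 * L * ∑ s ∈ Finset.Icc 1 u,
        (backProd Q u s) i r * η s * (if j s r = k then (1:ℝ) else 0) := by
    intro u
    induction u with
    | zero => intro _ i; simp [hw1, hv1]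
    | succ u ih =>
      intro hu i
      have hu' : u ≤ T := by omega
      have h1 : 1 ≤ u + 1 := by omega
      have hη := hηpos (u+1) h1 hu
      set χ : ℝ := if i = r ∧ j (u+1) i = k then 1 else 0 with hχ
      have hdiff_eq : w (u+1+1) i - v (u+1+1) i =
          (∑ l, P (u+1) i l • (w (u+1) l - v (u+1) l))
          - η (u+1) • (f' (S i (j (u+1) i)) (w (u+1) i) - f' (S' i (j (u+1) i)) (v (u+1) i)) := by
        rw [hwrec (u+1) h1 hu i, hvrec (u+1) h1 hu i]
        simp only [smul_sub, Finset.sum_sub_distrib]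
        abel
      have hgrad : ‖f' (S i (j (u+1) i)) (w (u+1) i) - f' (S' i (j (u+1) i)) (v (u+1) i)‖
          ≤ β * ‖w (u+1) i - v (u+1) i‖ + 2 * L * χ := by
        by_cases hc : i = r ∧ j (u+1) i = k
        · have hχ1 : χ = 1 := if_pos hc
          rw [hχ1]
          have := norm_sub_le (f' (S i (j (u+1) i)) (w (u+1) i)) (f' (S' i (j (u+1) i)) (v (u+1) i))
          have g1 := hgradbd (S i (j (u+1) i)) (w (u+1) i)
          have g2 := hgradbd (S' i (j (u+1) i)) (v (u+1) i)
          nlinarith [norm_nonneg (w (u+1) i - v (u+1) i)]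
        · have hS : S' i (j (u+1) i) = S i (j (u+1) i) := by
            apply hSS'
            simp only [ne_eq, Prod.mk.injEq, not_and]
            tauto
          rw [hS]
          have hχ0 : χ = 0 := if_neg hc
          rw [hχ0]
          have := hsmooth (S i (j (u+1) i)) (w (u+1) i) (v (u+1) i)
          linarith
      have hbound : ‖w (u+1+1) i - v (u+1+1) i‖ ≤
          (∑ l, Q (u+1) i l * ‖w (u+1) l - v (u+1) l‖) + 2 * L * η (u+1) * χ := by
        rw [hdiff_eq]
        have hA : ‖∑ l, P (u+1) i l • (w (u+1) l - v (u+1) l)‖ ≤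
            ∑ l, P (u+1) i l * ‖w (u+1) l - v (u+1) l‖ := by
          refine (norm_sum_le _ _).trans (Finset.sum_le_sum fun l _ => ?_)
          rw [norm_smul, Real.norm_eq_abs, abs_of_nonneg (hPpos (u+1) h1 hu i l)]
        have hB : ‖η (u+1) • (f' (S i (j (u+1) i)) (w (u+1) i) - f' (S' i (j (u+1) i)) (v (u+1) i))‖
            ≤ η (u+1) * (β * ‖w (u+1) i - v (u+1) i‖ + 2 * L * χ) := by
          rw [norm_smul, Real.norm_eq_abs, abs_of_nonneg hη.le]
          exact mul_le_mul_of_nonneg_left hgrad hη.le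
        have hQsum : ∑ l, Q (u+1) i l * ‖w (u+1) l - v (u+1) l‖ =
            (∑ l, P (u+1) i l * ‖w (u+1) l - v (u+1) l‖)
              + η (u+1) * β * ‖w (u+1) i - v (u+1) i‖ := by
          simp only [hQ, Matrix.add_apply, Matrix.smul_apply, Matrix.one_apply, smul_eq_mul,
            add_mul, Finset.sum_add_distrib, mul_ite, mul_one, mul_zero, ite_mul, zero_mul]
          rw [Finset.sum_ite_eq]
          simp
        calc ‖(∑ l, P (u+1) i l • (w (u+1) l - v (u+1) l))
              - η (u+1) • (f' (S i (j (u+1) i)) (w (u+1) i) - f' (S' i (j (u+1) i)) (v (u+1) i))‖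
            ≤ ‖∑ l, P (u+1) i l • (w (u+1) l - v (u+1) l)‖
              + ‖η (u+1) • (f' (S i (j (u+1) i)) (w (u+1) i) - f' (S' i (j (u+1) i)) (v (u+1) i))‖ :=
              norm_sub_le _ _
          _ ≤ (∑ l, P (u+1) i l * ‖w (u+1) l - v (u+1) l‖)
              + η (u+1) * (β * ‖w (u+1) i - v (u+1) i‖ + 2 * L * χ) := add_le_add hA hB
          _ = (∑ l, Q (u+1) i l * ‖w (u+1) l - v (u+1) l‖) + 2 * L * η (u+1) * χ := by
              rw [hQsum]; ring
      have hstep : (∑ l, Q (u+1) i l * ‖w (u+1) l - v (u+1) l‖) ≤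
          ∑ l, Q (u+1) i l * (2 * L * ∑ s ∈ Finset.Icc 1 u,
            (backProd Q u s) l r * η s * (if j s r = k then (1:ℝ) else 0)) :=
        Finset.sum_le_sum fun l _ =>
          mul_le_mul_of_nonneg_left (ih hu' l) (hQnn (u+1) h1 hu i l)
      have hsum_eq : (∑ l, Q (u+1) i l * (2 * L * ∑ s ∈ Finset.Icc 1 u,
            (backProd Q u s) l r * η s * (if j s r = k then (1:ℝ) else 0)))
          = 2 * L * ∑ s ∈ Finset.Icc 1 u,
            (backProd Q (u+1) s) i r * η s * (if j s r = k then (1:ℝ) else 0) := by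
        have swap : ∀ l, Q (u+1) i l * (2 * L * ∑ s ∈ Finset.Icc 1 u,
              (backProd Q u s) l r * η s * (if j s r = k then (1:ℝ) else 0))
            = ∑ s ∈ Finset.Icc 1 u, 2 * L * (Q (u+1) i l * ((backProd Q u s) l r
                * η s * (if j s r = k then (1:ℝ) else 0))) := by
          intro l
          rw [Finset.mul_sum, Finset.mul_sum]
          exact Finset.sum_congr rfl fun s _ => by ring
        simp_rw [swap]
        rw [Finset.sum_comm, Finset.mul_sum]
        refine Finset.sum_congr rfl fun s hs => ?_
        have hs' : s ≤ u := (Finset.mem_Icc.mp hs).2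
        rw [backProd_succ Q hs', Matrix.mul_apply, Finset.sum_mul, Finset.sum_mul,
          Finset.mul_sum]
        exact Finset.sum_congr rfl fun l _ => by ring
      have hχeq : 2 * L * η (u+1) * χ =
          2 * L * ((backProd Q (u+1) (u+1)) i r * η (u+1) * (if j (u+1) r = k then (1:ℝ) else 0)) := by
        rw [backProd_self, Matrix.one_apply]
        by_cases hir : i = r
        · subst hir
          by_cases h2 : j (u+1) i = k <;> simp [hχ, h2]
        · have : χ = 0 := if_neg (fun h => hir h.1)
          rw [this, if_neg hir]; ring
      calc ‖w (u+1+1) i - v (u+1+1) i‖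
          ≤ (∑ l, Q (u+1) i l * ‖w (u+1) l - v (u+1) l‖) + 2 * L * η (u+1) * χ := hbound
        _ ≤ (2 * L * ∑ s ∈ Finset.Icc 1 u,
              (backProd Q (u+1) s) i r * η s * (if j s r = k then (1:ℝ) else 0))
              + 2 * L * η (u+1) * χ := by
            rw [← hsum_eq]; exact add_le_add hstep le_rfl
        _ = 2 * L * ∑ s ∈ Finset.Icc 1 (u+1),
              (backProd Q (u+1) s) i r * η s * (if j s r = k then (1:ℝ) else 0) := by
            rw [Finset.sum_Icc_succ_top (by omega : 1 ≤ u + 1), hχeq]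
            ring
  have hkey := key T le_rfl r
  calc |f z (w (T+1) r) - f z (v (T+1) r)| ≤ L * ‖w (T+1) r - v (T+1) r‖ := hlip z _ _
    _ ≤ L * (2 * L * ∑ t ∈ Finset.Icc 1 T,
          (backProd Q T t) r r * η t * (if j t r = k then (1:ℝ) else 0)) :=
        mul_le_mul_of_nonneg_left hkey hL.le
    _ = 2 * L ^ 2 * ∑ t ∈ Finset.Icc 1 T,
          (backProd Q T t) r r * η t * (if j t r = k then (1:ℝ) else 0) := by ring
end
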